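/- arXiv:2411.08546 — 2 statements merged into one kernel-verified Lean document; each statement's English description precedes it below -/
import Mathlib

section
/- Let d ≥ 2, n ≥ 2d + 2, d ≤ r ≤ n - d, and let F ⊆ 2^[n] be a 2d-union family with |F_{d+1}| ≥ r. Then |F| ≤ Σ_{i=0}^{d} C(n,i) - C(n-d, d) + n - d. -/
open Finset
open scoped FinsetFamily

namespace Stmt15

def mu1 (A : Finset ℕ) : ℕ := ∑ x ∈ A, 2^x
def mu (F : Finset (Finset ℕ)) : ℕ := ∑ A ∈ F, mu1 A
def bnd (n d : ℕ) : ℕ := (∑ i ∈ Finset.range (d + 1), n.choose i) - (n - d).choose d + (n - d)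

lemma mu1_lt_of_ssubset {A B : Finset ℕ} (h : A ⊂ B) : mu1 A < mu1 B := by
  obtain ⟨x, hxB, hxA⟩ := exists_of_ssubset h
  exact Finset.sum_lt_sum_of_subset h.subset hxB hxA (by positivity)
    (fun j _ _ => by positivity)

lemma mu_le_of_subset {F G : Finset (Finset ℕ)} (h : F ⊆ G) : mu F ≤ mu G :=
  Finset.sum_le_sum_of_subset h

/-- the bound -/

lemma sum_pascal (n d : ℕ) :
    ∑ i ∈ range (d + 1), (n + 1).choose i
      = ∑ i ∈ range (d + 1), n.choose i + ∑ i ∈ range d, n.choose i := by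
  rw [Finset.sum_range_succ' (fun i => (n+1).choose i), Finset.sum_range_succ' (fun i => n.choose i)]
  simp only [Nat.choose_succ_succ', Nat.choose_zero_right]
  rw [Finset.sum_add_distrib]
  ring

lemma choose_le_sum (n d : ℕ) : n.choose d ≤ ∑ i ∈ range (d + 1), n.choose i :=
  Finset.single_le_sum (f := fun i => n.choose i) (fun _ _ => Nat.zero_le _)
    (self_mem_range_succ d)

/-- C(M,k) ≥ M for 1 ≤ k, k+1 ≤ M -/
lemma le_choose (M k : ℕ) (h1 : 1 ≤ k) (h2 : k + 1 ≤ M) : M ≤ M.choose k := by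
  obtain ⟨m, rfl⟩ : ∃ m, M = m + 1 := ⟨M - 1, by omega⟩
  obtain ⟨j, rfl⟩ : ∃ j, k = j + 1 := ⟨k - 1, by omega⟩
  have key := Nat.add_one_mul_choose_eq m j
  have h3 : j + 1 ≤ Nat.choose m j := by
    calc j + 1 = Nat.choose (j+1) j := (Nat.choose_succ_self_right j).symm
    _ ≤ Nat.choose m j := Nat.choose_le_choose j (by omega)
  have h4 : (m+1) * (j+1) ≤ (m+1).choose (j+1) * (j+1) := by
    calc (m+1) * (j+1) ≤ (m+1) * Nat.choose m j := Nat.mul_le_mul_left _ h3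
    _ = (m+1).choose (j+1) * (j+1) := by simpa [Nat.succ_eq_add_one] using key
  exact Nat.le_of_mul_le_mul_right h4 (by omega)

lemma pascal_choose (a b : ℕ) (ha : 1 ≤ a) (hb : 1 ≤ b) :
    a.choose b = (a-1).choose b + (a-1).choose (b-1) := by
  obtain ⟨a', rfl⟩ : ∃ a', a = a'+1 := ⟨a-1, by omega⟩
  obtain ⟨b', rfl⟩ : ∃ b', b = b'+1 := ⟨b-1, by omega⟩
  rw [Nat.choose_succ_succ' a' b']
  simp only [Nat.add_sub_cancel]
  omega

section Comp
variable {i j k s n : ℕ} {A B : Finset ℕ} {F : Finset (Finset ℕ)}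

lemma compress_eq (hj : j ∈ A) (hi : i ∉ A) :
    UV.compress {i} {j} A = insert i (A.erase j) := by
  have hij : i ≠ j := fun h => hi (h ▸ hj)
  rw [UV.compress, if_pos ⟨by simpa using hi, by simpa using hj⟩]
  rw [sup_eq_union, union_comm, ← insert_eq, sdiff_singleton_eq_erase]
  exact erase_insert_of_ne hij

lemma compress_eq_self (h : ¬ (j ∈ A ∧ i ∉ A)) :
    UV.compress {i} {j} A = A := by
  by_cases hij : i = j
  · subst hij; exact UV.compress_self _ _
  rw [UV.compress]
  by_cases hj : j ∈ A
  · by_cases hi : i ∈ A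
    · rw [if_neg]; rintro ⟨hd, -⟩; exact (disjoint_singleton_left.1 hd) hi
    · exact absurd ⟨hj, hi⟩ h
  · rw [if_neg]; rintro ⟨-, hs⟩; exact hj (singleton_subset_iff.1 hs)

/-- membership in a compressed family, unpacked -/
lemma mem_comp_cases (hA : A ∈ 𝓒 {i} {j} F) :
    (A ∈ F ∧ UV.compress {i} {j} A ∈ F) ∨
    (A ∉ F ∧ ∃ B ∈ F, j ∈ B ∧ i ∉ B ∧ A = insert i (B.erase j)) := by
  rw [UV.mem_compression] at hA
  obtain h | ⟨hA', B, hB, hBA⟩ := hA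
  · exact Or.inl h
  · refine Or.inr ⟨hA', B, hB, ?_⟩
    by_cases hc : j ∈ B ∧ i ∉ B
    · exact ⟨hc.1, hc.2, by rw [← hBA, compress_eq hc.1 hc.2]⟩
    · rw [compress_eq_self hc] at hBA
      exact absurd (hBA ▸ hB) hA'

lemma shift_mem (h : 𝓒 {i} {j} F = F) (hA : A ∈ F) (hj : j ∈ A) (hi : i ∉ A) :
    insert i (A.erase j) ∈ F := by
  have := UV.compress_mem_compression (u := {i}) (v := {j}) hA
  rw [h, compress_eq hj hi] at this
  exact this

/-- compression stays within the ground set -/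
lemma comp_ground (hi : i ∈ Icc 1 n) (hF : ∀ A ∈ F, A ⊆ Icc 1 n) :
    ∀ A ∈ 𝓒 {i} {j} F, A ⊆ Icc 1 n := by
  intro A hA
  obtain ⟨h1, -⟩ | ⟨-, B, hB, -, -, rfl⟩ := mem_comp_cases hA
  · exact hF _ h1
  · exact insert_subset hi ((erase_subset _ _).trans (hF _ hB))

private lemma key_ab (hun : ∀ A ∈ F, ∀ B ∈ F, (A ∪ B).card ≤ s)
    (hX : A ∈ F) (hcmpX : UV.compress {i} {j} A ∈ F)
    {C : Finset ℕ} (hC : C ∈ F) (hjC : j ∈ C) (hiC : i ∉ C) :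
    (A ∪ insert i (C.erase j)).card ≤ s := by
  by_cases hjA : j ∈ A
  · by_cases hiA : i ∈ A
    · refine le_trans (card_le_card ?_) (hun _ hX _ hC)
      intro x hx
      rcases mem_union.1 hx with hx | hx
      · exact mem_union_left _ hx
      · rcases mem_insert.1 hx with rfl | hx
        · exact mem_union_left _ hiA
        · exact mem_union_right _ (mem_of_mem_erase hx)
    · -- both move : A ∪ cmp C = cmp A ∪ C
      rw [compress_eq hjA hiA] at hcmpX
      have heq : A ∪ insert i (C.erase j) = (insert i (A.erase j)) ∪ C := by
        ext x
        simp only [mem_union, mem_insert, mem_erase]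
        constructor
        · rintro (hx | rfl | ⟨hxj, hxC⟩)
          · by_cases hxj : x = j
            · exact Or.inr (hxj ▸ hjC)
            · exact Or.inl (Or.inr ⟨hxj, hx⟩)
          · exact Or.inl (Or.inl rfl)
          · exact Or.inr hxC
        · rintro ((rfl | ⟨hxj, hxA⟩) | hx)
          · exact Or.inr (Or.inl rfl)
          · exact Or.inl hxA
          · by_cases hxj : x = j
            · exact Or.inl (hxj ▸ hjA)
            · exact Or.inr (Or.inr ⟨hxj, hx⟩)
      rw [heq]
      exact hun _ hcmpX _ hC
  · -- j ∉ A
    have hsub : A ∪ insert i (C.erase j) ⊆ insert i ((A ∪ C).erase j) := by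
      intro x hx
      rcases mem_union.1 hx with hx | hx
      · exact mem_insert_of_mem (mem_erase.2 ⟨fun h => hjA (h ▸ hx), mem_union_left _ hx⟩)
      · rcases mem_insert.1 hx with rfl | hx
        · exact mem_insert_self _ _
        · exact mem_insert_of_mem
            (mem_erase.2 ⟨(mem_erase.1 hx).1, mem_union_right _ (mem_of_mem_erase hx)⟩)
    refine le_trans (card_le_card hsub) ?_
    refine le_trans (card_insert_le _ _) ?_
    rw [card_erase_of_mem (mem_union_right _ hjC)]
    have := hun _ hX _ hC
    have hpos : 0 < (A ∪ C).card := card_pos.2 ⟨j, mem_union_right _ hjC⟩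
    omega

/-- compression preserves the union bound -/
lemma comp_union (hun : ∀ A ∈ F, ∀ B ∈ F, (A ∪ B).card ≤ s) :
    ∀ A ∈ 𝓒 {i} {j} F, ∀ B ∈ 𝓒 {i} {j} F, (A ∪ B).card ≤ s := by
  intro X hX Y hY
  obtain ⟨hX1, hX2⟩ | ⟨-, B, hB, hjB, hiB, rfl⟩ := mem_comp_cases hX <;>
    obtain ⟨hY1, hY2⟩ | ⟨-, C, hC, hjC, hiC, rfl⟩ := mem_comp_cases hY
  · exact hun _ hX1 _ hY1
  · exact key_ab hun hX1 hX2 hC hjC hiC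
  · rw [union_comm]
    exact key_ab hun hY1 hY2 hB hjB hiB
  · -- both moved
    have heq : insert i (B.erase j) ∪ insert i (C.erase j) = insert i ((B ∪ C).erase j) := by
      rw [insert_union, union_insert, insert_idem, erase_union_distrib]
    rw [heq]
    refine le_trans (card_insert_le _ _) ?_
    rw [card_erase_of_mem (mem_union_left _ hjB)]
    have := hun _ hB _ hC
    have hpos : 0 < (B ∪ C).card := card_pos.2 ⟨j, mem_union_left _ hjB⟩
    omega

/-- compression commutes with size filters -/
lemma comp_filter_card (hij : i ≠ j) :
    (𝓒 {i} {j} F).filter (fun A => A.card = k) = 𝓒 {i} {j} (F.filter (fun A => A.card = k)) := by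
  have hcard : ∀ A : Finset ℕ, (UV.compress {i} {j} A).card = A.card := fun A =>
    UV.card_compress (by simp) A
  ext X
  simp only [mem_filter]
  constructor
  · rintro ⟨hX, hXk⟩
    rw [UV.mem_compression]
    obtain ⟨h1, h2⟩ | ⟨h1, B, hB, hjB, hiB, rfl⟩ := mem_comp_cases hX
    · exact Or.inl ⟨mem_filter.2 ⟨h1, hXk⟩, mem_filter.2 ⟨h2, (hcard X).trans hXk⟩⟩
    · refine Or.inr ⟨fun hmem => h1 (mem_filter.1 hmem).1, B,
        mem_filter.2 ⟨hB, ?_⟩, compress_eq hjB hiB⟩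
      rw [← hXk, ← compress_eq hjB hiB, hcard]
  · intro hX
    obtain ⟨h1, h2⟩ | ⟨h1, B, hB, hjB, hiB, rfl⟩ := mem_comp_cases hX
    · obtain ⟨hXF, hXk⟩ := mem_filter.1 h1
      refine ⟨UV.mem_compression.2 (Or.inl ⟨hXF, (mem_filter.1 h2).1⟩), hXk⟩
    · obtain ⟨hBF, hBk⟩ := mem_filter.1 hB
      have hXk : (insert i (B.erase j)).card = k := by
        rw [← compress_eq hjB hiB, hcard]; exact hBk
      refine ⟨UV.mem_compression.2 ?_, hXk⟩
      by_cases hXF : insert i (B.erase j) ∈ F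
      · refine Or.inl ⟨hXF, ?_⟩
        rw [compress_eq_self]
        · exact hXF
        · rintro ⟨hj', hi'⟩
          exact hi' (mem_insert_self _ _)
      · exact Or.inr ⟨hXF, B, hBF, compress_eq hjB hiB⟩

lemma mu_comp_lt (hij : i < j) (hne : 𝓒 {i} {j} F ≠ F) : mu (𝓒 {i} {j} F) < mu F := by
  classical
  have uA : F.filter (fun A => UV.compress {i} {j} A ∈ F)
      ∪ F.filter (fun A => ¬ UV.compress {i} {j} A ∈ F) = F :=
    filter_union_filter_not_eq _ _
  have ne2 : (F.filter (fun A => ¬ UV.compress {i} {j} A ∈ F)).Nonempty := by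
    refine nonempty_iff_ne_empty.2 fun z => hne ?_
    rw [UV.compression, filter_image, z, image_empty, union_empty]
    rwa [z, union_empty] at uA
  unfold mu
  rw [UV.compression, sum_union UV.compress_disjoint, filter_image,
    sum_image UV.compress_injOn]
  conv_rhs => rw [← uA]
  rw [sum_union (disjoint_filter_filter_not F F _), add_lt_add_iff_left]
  refine sum_lt_sum_of_nonempty ne2 fun A hA => ?_
  obtain ⟨hAF, hAc⟩ := mem_filter.1 hA
  have hmoved : j ∈ A ∧ i ∉ A := by
    by_contra hc
    rw [compress_eq_self hc] at hAc
    exact hAc hAF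
  rw [compress_eq hmoved.1 hmoved.2]
  unfold mu1
  have hiA : i ∉ A.erase j := fun h => hmoved.2 (mem_of_mem_erase h)
  rw [sum_insert hiA]
  have herase : (∑ x ∈ A.erase j, 2^x) + 2^j = ∑ x ∈ A, 2^x := by
    rw [Finset.sum_erase_add _ _ hmoved.1]
  have hpow : (2:ℕ)^i < 2^j := Nat.pow_lt_pow_right (by norm_num) hij
  omega
end Comp

section Base
variable {d n : ℕ} {F : Finset (Finset ℕ)}
lemma bnd_base (d : ℕ) (hd : 1 ≤ d) : bnd (2*d+1) d = 4^d := by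
  have h1 : ∑ i ∈ Finset.range (d + 1), (2*d+1).choose i = 4^d :=
    Nat.sum_range_choose_halfway d
  have h2 : 2*d+1 - d = d + 1 := by omega
  have h3 : (d+1).choose d = d + 1 := Nat.choose_succ_self_right d
  have h4 : d + 1 ≤ 4^d := by
    have := Nat.lt_two_pow_self (n := d)
    have h5 : (2:ℕ)^d ≤ 4^d := Nat.pow_le_pow_left (by norm_num) d
    omega
  rw [bnd, h1, h2, h3]
  omega

lemma base_case (hd : 2 ≤ d) (hn : n = 2*d+1) (hF : ∀ A ∈ F, A ⊆ Icc 1 n)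
    (hun : ∀ A ∈ F, ∀ B ∈ F, (A ∪ B).card ≤ 2*d) : F.card ≤ bnd n d := by
  classical
  have hIcc : (Icc 1 n).card = n := by rw [Nat.card_Icc]; omega
  set U : Finset ℕ := Icc 1 n with hU
  set S : Finset (Finset ℕ) := F.image (fun A => U \ A) with hS
  have hScard : S.card = F.card := by
    apply card_image_of_injOn
    intro A hA B hB hAB
    have hAB' : U \ A = U \ B := hAB
    have h2 : U \ (U \ A) = U \ (U \ B) := by rw [hAB']
    rwa [Finset.sdiff_sdiff_eq_self (hF _ hA), Finset.sdiff_sdiff_eq_self (hF _ hB)] at h2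
  set S' : Finset (Finset ℕ) := S.image (fun Y => U \ Y) with hS'
  have hSsub : ∀ Y ∈ S, Y ⊆ U := by
    intro Y hY
    obtain ⟨A, -, rfl⟩ := mem_image.1 hY
    exact sdiff_subset
  have hS'card : S'.card = S.card := by
    apply card_image_of_injOn
    intro A hA B hB hAB
    have hAB' : U \ A = U \ B := hAB
    have h2 : U \ (U \ A) = U \ (U \ B) := by rw [hAB']
    rwa [Finset.sdiff_sdiff_eq_self (hSsub _ hA), Finset.sdiff_sdiff_eq_self (hSsub _ hB)] at h2
  have hdisj : Disjoint S S' := by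
    rw [disjoint_left]
    intro Y hYS hYS'
    obtain ⟨A, hAF, rfl⟩ := mem_image.1 hYS
    obtain ⟨Z, hZS, hZY⟩ := mem_image.1 hYS'
    obtain ⟨B, hBF, rfl⟩ := mem_image.1 hZS
    rw [Finset.sdiff_sdiff_eq_self (hF _ hBF)] at hZY
    -- B = U \ A, so A ∪ B = U
    have hcover : A ∪ B = U := by
      rw [hZY, union_sdiff_of_subset (hF _ hAF)]
    have := hun _ hAF _ hBF
    rw [hcover, hIcc] at this
    omega
  have hsubP : S ∪ S' ⊆ U.powerset := by
    intro Y hY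
    rcases mem_union.1 hY with hY | hY
    · exact mem_powerset.2 (hSsub _ hY)
    · obtain ⟨Z, -, rfl⟩ := mem_image.1 hY
      exact mem_powerset.2 sdiff_subset
  have hcount : S.card + S'.card ≤ 2^n := by
    rw [← card_union_of_disjoint hdisj]
    calc (S ∪ S').card ≤ U.powerset.card := card_le_card hsubP
    _ = 2^n := by rw [card_powerset, hIcc]
  have h2 : 2 * F.card ≤ 2^n := by omega
  have h4 : (2:ℕ)^n = 2 * 4^d := by
    subst hn
    have e1 : (4:ℕ)^d = 2^(2*d) := by
      rw [show (4:ℕ) = 2^2 by norm_num, ← pow_mul]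
    have e2 : (2:ℕ)^(2*d+1) = 2^(2*d)*2 := pow_succ 2 (2*d)
    omega
  rw [hn, bnd_base d (by omega)]
  omega
end Base

section Missing
variable {N d : ℕ} {G : Finset (Finset ℕ)}
/-- cones over two distinct d-sets give many missing (d-1)-sets -/
lemma missing_lower_two (hd : 3 ≤ d) (hN : 2*d+1 ≤ N)
    {S1 S2 : Finset ℕ} (h1 : S1 ⊆ Icc 1 N) (h2 : S2 ⊆ Icc 1 N)
    (hc1 : S1.card = d) (hc2 : S2.card = d) (hne : S1 ≠ S2)
    (hcone1 : ∀ i ∈ Icc 1 N, i ∉ S1 → insert i S1 ∈ G)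
    (hcone2 : ∀ i ∈ Icc 1 N, i ∉ S2 → insert i S2 ∈ G) :
    (N-d).choose (d-1) + (N-d-1).choose (d-2) ≤
      ((powersetCard (d-1) (Icc 1 N)).filter (fun S => ∃ B ∈ G, Disjoint S B)).card := by
  classical
  have hIcc : (Icc 1 N).card = N := by rw [Nat.card_Icc]; omega
  set M := (powersetCard (d-1) (Icc 1 N)).filter (fun S => ∃ B ∈ G, Disjoint S B) with hM
  set C1 := powersetCard (d-1) (Icc 1 N \ S1) with hC1
  set C2 := powersetCard (d-1) (Icc 1 N \ S2) with hC2
  have hcone : ∀ (S0 : Finset ℕ), S0 ⊆ Icc 1 N → S0.card = d →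
      (∀ i ∈ Icc 1 N, i ∉ S0 → insert i S0 ∈ G) →
      powersetCard (d-1) (Icc 1 N \ S0) ⊆ M := by
    intro S0 hS0 hcS0 hcone0 S hS
    rw [mem_powersetCard] at hS
    obtain ⟨hSsub, hScard⟩ := hS
    have hSIcc : S ⊆ Icc 1 N := hSsub.trans sdiff_subset
    have hSd : Disjoint S S0 := disjoint_left.2 (fun a haS haS0 =>
      (mem_sdiff.1 (hSsub haS)).2 haS0)
    -- find i outside S ∪ S0
    have hcard : (S ∪ S0).card < (Icc 1 N).card := by
      have := card_union_le S S0
      omega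
    obtain ⟨i, hiIcc, hiSS0⟩ : ∃ i ∈ Icc 1 N, i ∉ S ∪ S0 := by
      by_contra hcon
      push_neg at hcon
      have : Icc 1 N ⊆ S ∪ S0 := fun x hx => hcon x hx
      exact absurd (card_le_card this) (by omega)
    rw [mem_union] at hiSS0
    push_neg at hiSS0
    refine mem_filter.2 ⟨mem_powersetCard.2 ⟨hSIcc, hScard⟩, insert i S0,
      hcone0 i hiIcc hiSS0.2, ?_⟩
    rw [disjoint_insert_right]
    exact ⟨hiSS0.1, hSd⟩
  have hsub1 : C1 ⊆ M := hcone S1 h1 hc1 hcone1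
  have hsub2 : C2 ⊆ M := hcone S2 h2 hc2 hcone2
  have hcC1 : C1.card = (N-d).choose (d-1) := by
    rw [hC1, card_powersetCard, card_sdiff_of_subset h1, hIcc, hc1]
  have hcC2 : C2.card = (N-d).choose (d-1) := by
    rw [hC2, card_powersetCard, card_sdiff_of_subset h2, hIcc, hc2]
  have hinter : (C1 ∩ C2).card ≤ (N-d-1).choose (d-1) := by
    have hsub : C1 ∩ C2 ⊆ powersetCard (d-1) (Icc 1 N \ (S1 ∪ S2)) := by
      intro S hS
      obtain ⟨hS1', hS2'⟩ := mem_inter.1 hS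
      rw [mem_powersetCard] at hS1' hS2' ⊢
      refine ⟨fun x hx => ?_, hS1'.2⟩
      have m1 := mem_sdiff.1 (hS1'.1 hx)
      have m2 := mem_sdiff.1 (hS2'.1 hx)
      rw [mem_sdiff, mem_union]
      exact ⟨m1.1, fun h => h.elim m1.2 m2.2⟩
    refine le_trans (card_le_card hsub) ?_
    rw [card_powersetCard]
    apply Nat.choose_le_choose
    have hU : S1 ⊂ S1 ∪ S2 := by
      refine ssubset_iff_of_subset subset_union_left |>.2 ?_
      obtain ⟨x, hx1, hx2⟩ : ∃ x, x ∈ S2 ∧ x ∉ S1 := by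
        by_contra hcon
        push_neg at hcon
        exact hne (eq_of_subset_of_card_le hcon (by omega)).symm
      exact ⟨x, mem_union_right _ hx1, hx2⟩
    have : d + 1 ≤ (S1 ∪ S2).card := by
      have := card_lt_card hU
      omega
    have := card_sdiff_of_subset (union_subset h1 h2)
    have := card_union_le S1 S2
    rw [card_sdiff_of_subset (union_subset h1 h2), hIcc]
    omega
  have hPascal : (N-d).choose (d-1) = (N-d-1).choose (d-1) + (N-d-1).choose (d-2) := by
    have e1 : N - d - 1 + 1 = N - d := by omega
    have e2 : d - 2 + 1 = d - 1 := by omega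
    calc (N-d).choose (d-1) = ((N-d-1)+1).choose ((d-2)+1) := by rw [e1, e2]
    _ = (N-d-1).choose (d-2) + (N-d-1).choose ((d-2)+1) := Nat.choose_succ_succ' _ _
    _ = (N-d-1).choose (d-1) + (N-d-1).choose (d-2) := by rw [e2]; omega
  have hunion : (C1 ∪ C2).card + (C1 ∩ C2).card = C1.card + C2.card :=
    card_union_add_card_inter _ _
  have hfinal : C1 ∪ C2 ⊆ M := union_subset hsub1 hsub2
  have := card_le_card hfinal
  omega

/-- C(M,k) ≥ k+1 when k+1 ≤ M -/
lemma succ_le_choose (M k : ℕ) (h : k + 1 ≤ M) : k + 1 ≤ M.choose k := by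
  calc k + 1 = (k+1).choose k := (Nat.choose_succ_self_right k).symm
  _ ≤ M.choose k := Nat.choose_le_choose k h

lemma missing_lower (hd : 3 ≤ d) (hN : 2*d+1 ≤ N)
    (hG : ∀ B ∈ G, B ⊆ Icc 1 N)
    (hGcard : ∀ B ∈ G, B.card = d+1)
    (hGsize : d ≤ G.card)
    (hshift : ∀ B ∈ G, ∀ i j : ℕ, 1 ≤ i → i < j → j ∈ B → i ∉ B →
      insert i (B.erase j) ∈ G) :
    (N - d).choose (d-1) ≤
      ((powersetCard (d-1) (Icc 1 N)).filter (fun S => ∃ B ∈ G, Disjoint S B)).card := by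
  classical
  have hIcc : (Icc 1 N).card = N := by rw [Nat.card_Icc]; omega
  set Miss := (powersetCard (d-1) (Icc 1 N)).filter (fun S => ∃ B ∈ G, Disjoint S B) with hMiss
  have hGne : G.Nonempty := card_pos.1 (by omega)
  have hmem_le : ∀ B ∈ G, ∀ x ∈ B, 1 ≤ x ∧ x ≤ N := fun B hB x hx => by
    have := hG B hB hx; rw [mem_Icc] at this; exact this
  -- the maximal element
  set M0 := G.sup id with hM0
  have hM0ne : M0.Nonempty := by
    obtain ⟨B, hB⟩ := hGne
    have hBne : B.Nonempty := by
      rw [← card_pos, hGcard B hB]; omega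
    obtain ⟨x, hx⟩ := hBne
    exact ⟨x, mem_sup.2 ⟨B, hB, hx⟩⟩
  set xs := M0.max' hM0ne with hxs
  obtain ⟨Bs, hBsG, hBsxs⟩ : ∃ B ∈ G, xs ∈ B := mem_sup.1 (max'_mem M0 hM0ne)
  have hxs_ub : ∀ B ∈ G, ∀ x ∈ B, x ≤ xs := fun B hB x hx =>
    le_max' M0 x (mem_sup.2 ⟨B, hB, hx⟩)
  have hxs_le : xs ≤ N := (hmem_le Bs hBsG xs hBsxs).2
  have hIccd : (Icc 1 d).card = d := by rw [Nat.card_Icc]; omega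
  have hxs_ge : d + 2 ≤ xs := by
    by_contra hcon
    push_neg at hcon
    have hsub : ∀ B ∈ G, B = Icc 1 (d+1) := by
      intro B hB
      have hBsub : B ⊆ Icc 1 (d+1) := fun x hx => by
        rw [mem_Icc]
        have h1 := hmem_le B hB x hx
        have h2 := hxs_ub B hB x hx
        omega
      have hcI : (Icc 1 (d+1)).card = d+1 := by rw [Nat.card_Icc]; omega
      exact eq_of_subset_of_card_le hBsub (by rw [hcI, hGcard B hB])
    have : G ⊆ {Icc 1 (d+1)} := fun B hB => mem_singleton.2 (hsub B hB)
    have := card_le_card this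
    rw [card_singleton] at this
    omega
  -- reachability of canonical members
  have reach : ∀ m : ℕ, ∀ B, B ∈ G → (∑ x ∈ B, x) ≤ m → ∀ b ∈ B, (∀ x ∈ B, x ≤ b) →
      d + 2 ≤ b → insert b (Icc 1 d) ∈ G := by
    intro m
    induction m with
    | zero =>
      intro B hB hsum b hb _ hdb
      have : b ≤ ∑ x ∈ B, x := single_le_sum (f := fun x => x) (fun _ _ => Nat.zero_le _) hb
      omega
    | succ m ih =>
      intro B hB hsum b hb hmax hdb
      by_cases heq : B = insert b (Icc 1 d)
      · rw [← heq]; exact hB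
      · have hcardB : B.card = d + 1 := hGcard B hB
        have hcarde : (B.erase b).card = d := by rw [card_erase_of_mem hb]; omega
        have hbB : B.erase b ≠ Icc 1 d := by
          intro h
          apply heq
          rw [← insert_erase hb, h]
        obtain ⟨jj, hjjB, hjjI⟩ : ∃ jj ∈ B.erase b, jj ∉ Icc 1 d := by
          by_contra hcon
          push_neg at hcon
          exact hbB (eq_of_subset_of_card_le hcon (by omega))
        obtain ⟨ii, hiiI, hiiB⟩ : ∃ ii ∈ Icc 1 d, ii ∉ B := by
          by_contra hcon
          push_neg at hcon
          have hsubI : Icc 1 d ⊆ B.erase b := by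
            intro x hx
            have hxd := mem_Icc.1 hx
            exact mem_erase.2 ⟨by omega, hcon x hx⟩
          exact hbB (eq_of_subset_of_card_le hsubI (by omega)).symm
        have hii := mem_Icc.1 hiiI
        have hjj : jj ∈ B := mem_of_mem_erase hjjB
        have hjjd : d + 1 ≤ jj := by
          have h1 := hmem_le B hB jj hjj
          rw [mem_Icc] at hjjI
          omega
        have hB' : insert ii (B.erase jj) ∈ G :=
          hshift B hB ii jj (by omega) (by omega) hjj hiiB
        have hjjb : jj ≠ b := (mem_erase.1 hjjB).1
        have hbB' : b ∈ insert ii (B.erase jj) :=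
          mem_insert_of_mem (mem_erase.2 ⟨fun h => hjjb h.symm, hb⟩)
        have hmax' : ∀ x ∈ insert ii (B.erase jj), x ≤ b := by
          intro x hx
          rcases mem_insert.1 hx with rfl | hx
          · omega
          · exact hmax x (mem_of_mem_erase hx)
        have hsum' : (∑ x ∈ insert ii (B.erase jj), x) ≤ m := by
          have hiie : ii ∉ B.erase jj := fun h => hiiB (mem_of_mem_erase h)
          rw [sum_insert hiie]
          have h2 : (∑ x ∈ B.erase jj, x) + jj = ∑ x ∈ B, x :=
            Finset.sum_erase_add _ _ hjj
          omega
        exact ih _ hB' hsum' b hbB' hmax' hdb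
  have hreach0 : insert xs (Icc 1 d) ∈ G :=
    reach (∑ x ∈ Bs, x) Bs hBsG le_rfl xs hBsxs (hxs_ub Bs hBsG) hxs_ge
  have hxsI : xs ∉ Icc 1 d := by rw [mem_Icc]; omega
  have hcanon : ∀ k, 1 ≤ k → d + k ≤ xs → insert (d+k) (Icc 1 d) ∈ G := by
    intro k hk hkxs
    rcases eq_or_lt_of_le hkxs with heq | hlt
    · rw [heq]; exact hreach0
    · have hnm : d + k ∉ insert xs (Icc 1 d) := by
        rw [mem_insert, mem_Icc]
        push_neg
        exact ⟨by omega, fun _ => by omega⟩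
      have h2 := hshift _ hreach0 (d+k) xs (by omega) hlt (mem_insert_self xs _) hnm
      rwa [erase_insert hxsI] at h2
  set w := xs - d with hw
  have hw2 : 2 ≤ w := by omega
  by_cases hwd : d ≤ w
  · -- full cone case
    have hsub : powersetCard (d-1) (Icc (d+1) N) ⊆ Miss := by
      intro S hS
      rw [mem_powersetCard] at hS
      obtain ⟨hSsub, hScard⟩ := hS
      have hSIcc : S ⊆ Icc 1 N := hSsub.trans (Icc_subset_Icc (by omega) le_rfl)
      obtain ⟨k, hk1, hkd, hkS⟩ : ∃ k, 1 ≤ k ∧ k ≤ d ∧ d + k ∉ S := by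
        by_contra hcon
        push_neg at hcon
        have hsubS : Icc (d+1) (2*d) ⊆ S := by
          intro x hx
          rw [mem_Icc] at hx
          have := hcon (x - d) (by omega) (by omega)
          rwa [show d + (x-d) = x by omega] at this
        have := card_le_card hsubS
        rw [Nat.card_Icc] at this
        omega
      refine mem_filter.2 ⟨mem_powersetCard.2 ⟨hSIcc, hScard⟩, _,
        hcanon k hk1 (by omega), ?_⟩
      rw [disjoint_insert_right]
      refine ⟨hkS, disjoint_left.2 fun x hxS hxI => ?_⟩
      have h1 := mem_Icc.1 (hSsub hxS)
      have h2 := mem_Icc.1 hxI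
      omega
    have hcard : (powersetCard (d-1) (Icc (d+1) N)).card = (N-d).choose (d-1) := by
      rw [card_powersetCard, Nat.card_Icc, show N + 1 - (d+1) = N - d by omega]
    rw [← hcard]
    exact card_le_card hsub
  · -- window case
    push_neg at hwd
    have hxsdw : xs = d + w := by omega
    have hmemW : ∀ B ∈ G, B ⊆ Icc 1 (d+w) := by
      intro B hB x hx
      have h1 := hmem_le B hB x hx
      have h2 := hxs_ub B hB x hx
      rw [mem_Icc]
      omega
    set W := Icc 1 (d+w) with hWdef
    set Win := Icc (d+1) (d+w) with hWindef
    set Out := Icc (d+w+1) N with hOutdef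
    set R := N - d - w with hR
    have hWcard : W.card = d + w := by rw [hWdef, Nat.card_Icc]; omega
    have hWincard : Win.card = w := by rw [hWindef, Nat.card_Icc]; omega
    have hOutcard : Out.card = R := by rw [hOutdef, Nat.card_Icc]; omega
    have hWOut : ∀ x, x ∈ W → x ∈ Out → False := by
      intro x h1 h2
      rw [hWdef, mem_Icc] at h1
      rw [hOutdef, mem_Icc] at h2
      omega
    set Ta := (range (w-1)).biUnion (fun t => powersetCard t Win) with hTa
    set Tb := G.image (fun B => W \ B) with hTb
    have hTa_prop : ∀ T ∈ Ta, T ⊆ Win ∧ T.card ≤ w - 2 := by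
      intro T hT
      obtain ⟨t, ht, hT2⟩ := mem_biUnion.1 hT
      rw [mem_powersetCard] at hT2
      have := mem_range.1 ht
      exact ⟨hT2.1, by omega⟩
    have hTb_prop : ∀ T ∈ Tb, T ⊆ W ∧ T.card = w - 1 := by
      intro T hT
      obtain ⟨B, hB, rfl⟩ := mem_image.1 hT
      refine ⟨sdiff_subset, ?_⟩
      rw [card_sdiff_of_subset (hmemW B hB), hWcard, hGcard B hB]
      omega
    have hdisjT : Disjoint Ta Tb := by
      rw [disjoint_left]
      intro T hTa' hTb'
      have h1 := (hTa_prop T hTa').2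
      have h2 := (hTb_prop T hTb').2
      omega
    set T𝒯 := Ta ∪ Tb with hT𝒯
    have hT_prop : ∀ T ∈ T𝒯, T ⊆ W ∧ T.card ≤ w - 1 ∧ ∃ B ∈ G, Disjoint T B := by
      intro T hT
      rcases mem_union.1 hT with hT | hT
      · obtain ⟨hTsub, hTcard⟩ := hTa_prop T hT
        have hTW : T ⊆ W := hTsub.trans (Icc_subset_Icc (by omega) le_rfl)
        obtain ⟨x, hxWin, hxT⟩ : ∃ x ∈ Win, x ∉ T := by
          by_contra hcon
          push_neg at hcon
          have := card_le_card hcon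
          omega
        rw [hWindef, mem_Icc] at hxWin
        refine ⟨hTW, by omega, insert x (Icc 1 d), ?_, ?_⟩
        · have := hcanon (x - d) (by omega) (by omega)
          rwa [show d + (x-d) = x by omega] at this
        · rw [disjoint_insert_right]
          refine ⟨hxT, disjoint_left.2 fun y hyT hyI => ?_⟩
          have h1 := mem_Icc.1 (hTsub hyT)
          have h2 := mem_Icc.1 hyI
          omega
      · obtain ⟨B, hB, rfl⟩ := mem_image.1 hT
        exact ⟨sdiff_subset, le_of_eq (hTb_prop _ hT).2, B, hB, sdiff_disjoint⟩
    set SS := T𝒯.biUnion (fun T => (powersetCard (d-1-T.card) Out).image (fun E => T ∪ E))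
      with hSS
    -- SS ⊆ Miss
    have hSS_sub : SS ⊆ Miss := by
      intro S hS
      obtain ⟨T, hT, hS2⟩ := mem_biUnion.1 hS
      obtain ⟨E, hE, rfl⟩ := mem_image.1 hS2
      rw [mem_powersetCard] at hE
      obtain ⟨hTW, hTcard, B, hBG, hTB⟩ := hT_prop T hT
      have hdisjTE : Disjoint T E :=
        disjoint_left.2 fun x hxT hxE => hWOut x (hTW hxT) (hE.1 hxE)
      have hScard : (T ∪ E).card = d - 1 := by
        rw [card_union_of_disjoint hdisjTE, hE.2]
        omega
      have hSIcc : T ∪ E ⊆ Icc 1 N := by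
        apply union_subset
        · exact hTW.trans (Icc_subset_Icc le_rfl (by omega))
        · exact hE.1.trans (Icc_subset_Icc (by omega) le_rfl)
      refine mem_filter.2 ⟨mem_powersetCard.2 ⟨hSIcc, hScard⟩, B, hBG, ?_⟩
      rw [disjoint_union_left]
      refine ⟨hTB, disjoint_left.2 fun x hxE hxB => ?_⟩
      exact hWOut x (hmemW B hBG |>.trans (Icc_subset_Icc le_rfl le_rfl) hxB) (hE.1 hxE)
    -- card of SS
    have hinner_card : ∀ T ∈ T𝒯,
        ((powersetCard (d-1-T.card) Out).image (fun E => T ∪ E)).card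
          = R.choose (d-1-T.card) := by
      intro T hT
      obtain ⟨hTW, -, -⟩ := hT_prop T hT
      rw [card_image_of_injOn, card_powersetCard, hOutcard]
      intro E1 hE1 E2 hE2 h12
      have h12' : T ∪ E1 = T ∪ E2 := h12
      rw [mem_coe, mem_powersetCard] at hE1 hE2
      have key : ∀ E : Finset ℕ, E ⊆ Out → (T ∪ E) \ W = E := by
        intro E hE
        ext x
        rw [mem_sdiff, mem_union]
        constructor
        · rintro ⟨hx | hx, hxW⟩
          · exact absurd (hTW hx) hxW
          · exact hx
        · intro hx
          exact ⟨Or.inr hx, fun hxW => hWOut x hxW (hE hx)⟩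
      have hthis := key E1 hE1.1
      rw [h12', key E2 hE2.1] at hthis
      exact hthis.symm
    have hSS_card : SS.card = ∑ T ∈ T𝒯, R.choose (d-1-T.card) := by
      rw [hSS, card_biUnion, ]
      · exact sum_congr rfl hinner_card
      · intro T hT T' hT' hne
        rw [Function.onFun, disjoint_left]
        intro S hS1 hS2
        obtain ⟨E, hE, rfl⟩ := mem_image.1 hS1
        obtain ⟨E', hE', hEq⟩ := mem_image.1 hS2
        rw [mem_powersetCard] at hE hE'
        have hTW := (hT_prop T hT).1
        have hTW' := (hT_prop T' hT').1
        have key : ∀ (T0 E0 : Finset ℕ), T0 ⊆ W → E0 ⊆ Out → (T0 ∪ E0) ∩ W = T0 := by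
          intro T0 E0 hT0 hE0
          ext x
          rw [mem_inter, mem_union]
          constructor
          · rintro ⟨hx | hx, hxW⟩
            · exact hx
            · exact absurd hxW (fun h => hWOut x h (hE0 hx))
          · intro hx
            exact ⟨Or.inl hx, hT0 hx⟩
        have h1 := key T E hTW hE.1
        have h2 := key T' E' hTW' hE'.1
        rw [hEq] at h2
        exact hne (h1.symm.trans h2)
    -- sum over Ta
    have hTa_sum : ∑ T ∈ Ta, R.choose (d-1-T.card)
        = ∑ t ∈ range (w-1), (w.choose t) * R.choose (d-1-t) := by
      rw [hTa, sum_biUnion]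
      · apply sum_congr rfl
        intro t ht
        have : ∀ T ∈ powersetCard t Win, R.choose (d-1-T.card) = R.choose (d-1-t) := by
          intro T hT
          rw [(mem_powersetCard.1 hT).2]
        rw [sum_congr rfl this, sum_const, card_powersetCard, hWincard, smul_eq_mul]
      · intro t ht t' ht' hne
        rw [Function.onFun, disjoint_left]
        intro T h1 h2
        rw [mem_powersetCard] at h1 h2
        exact hne (h1.2 ▸ h2.2)
    -- sum over Tb
    have hTb_card : Tb.card = G.card := by
      rw [hTb]
      apply card_image_of_injOn
      intro B1 h1 B2 h2 h12
      have h12' : W \ B1 = W \ B2 := h12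
      have key : ∀ B ∈ G, W \ (W \ B) = B := fun B hB =>
        Finset.sdiff_sdiff_eq_self (hmemW B hB)
      rw [mem_coe] at h1 h2
      have hthis := key B1 h1
      rw [h12', key B2 h2] at hthis
      exact hthis.symm
    have hTb_sum : ∑ T ∈ Tb, R.choose (d-1-T.card) = G.card * R.choose (d-w) := by
      have : ∀ T ∈ Tb, R.choose (d-1-T.card) = R.choose (d-w) := by
        intro T hT
        rw [(hTb_prop T hT).2, show d - 1 - (w-1) = d - w by omega]
      rw [sum_congr rfl this, sum_const, smul_eq_mul, hTb_card]
    -- Vandermonde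
    have hvand : (N-d).choose (d-1) = ∑ t ∈ range d, (w.choose t) * R.choose (d-1-t) := by
      have h1 : N - d = w + R := by omega
      rw [h1, Nat.add_choose_eq]
      rw [Finset.Nat.sum_antidiagonal_eq_sum_range_succ_mk]
      rw [show (d - 1).succ = d by omega]
    -- split the Vandermonde sum
    have hzero : ∑ t ∈ Ico (w+1) d, (w.choose t) * R.choose (d-1-t) = 0 := by
      apply sum_eq_zero
      intro t ht
      rw [mem_Ico] at ht
      rw [Nat.choose_eq_zero_of_lt (by omega), zero_mul]
    have hIco : ∑ t ∈ Ico (w-1) d, (w.choose t) * R.choose (d-1-t)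
        = w * R.choose (d-w) + R.choose (d-1-w) := by
      rw [Finset.sum_eq_sum_Ico_succ_bot (show w - 1 < d by omega),
        show w - 1 + 1 = w by omega,
        Finset.sum_eq_sum_Ico_succ_bot (show w < d by omega), hzero]
      have e1 : w.choose (w-1) = w := by
        have := Nat.choose_succ_self_right (w-1)
        rwa [show w - 1 + 1 = w by omega] at this
      have e2 : d - 1 - (w - 1) = d - w := by omega
      rw [e1, e2, Nat.choose_self, one_mul]
      ring
    have htotal : (∑ t ∈ range (w-1), (w.choose t) * R.choose (d-1-t))
        + ∑ t ∈ Ico (w-1) d, (w.choose t) * R.choose (d-1-t)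
        = ∑ t ∈ range d, (w.choose t) * R.choose (d-1-t) :=
      Finset.sum_range_add_sum_Ico _ (show w - 1 ≤ d by omega)
    have hsplit : ∑ t ∈ range d, (w.choose t) * R.choose (d-1-t)
        = (∑ t ∈ range (w-1), (w.choose t) * R.choose (d-1-t))
          + (w * R.choose (d-w) + R.choose (d-1-w)) := by
      rw [← htotal, hIco]
    -- key binomial inequality
    have hkey : w * R.choose (d-w) + R.choose (d-1-w) ≤ d * R.choose (d-w) := by
      have hid := Nat.choose_succ_right_eq R (d-1-w)
      rw [show d-1-w+1 = d-w by omega] at hid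
      have h2 : 1 ≤ R - (d-1-w) := by omega
      have h1 : R.choose (d-1-w) ≤ (d-w) * R.choose (d-w) := by
        calc R.choose (d-1-w) = R.choose (d-1-w) * 1 := by ring
        _ ≤ R.choose (d-1-w) * (R-(d-1-w)) := Nat.mul_le_mul_left _ h2
        _ = (d-w) * R.choose (d-w) := by rw [← hid]; ring
      calc w * R.choose (d-w) + R.choose (d-1-w)
          ≤ w * R.choose (d-w) + (d-w) * R.choose (d-w) := Nat.add_le_add_left h1 _
      _ = (w + (d-w)) * R.choose (d-w) := by rw [add_mul]
      _ = d * R.choose (d-w) := by rw [show w + (d-w) = d by omega]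
    have hGmul : d * R.choose (d-w) ≤ G.card * R.choose (d-w) :=
      Nat.mul_le_mul_right _ hGsize
    -- assemble
    calc (N-d).choose (d-1)
        = (∑ t ∈ range (w-1), (w.choose t) * R.choose (d-1-t))
          + (w * R.choose (d-w) + R.choose (d-1-w)) := by rw [hvand, hsplit]
    _ ≤ (∑ t ∈ range (w-1), (w.choose t) * R.choose (d-1-t))
          + d * R.choose (d-w) := Nat.add_le_add_left hkey _
    _ ≤ (∑ t ∈ range (w-1), (w.choose t) * R.choose (d-1-t))
          + G.card * R.choose (d-w) := Nat.add_le_add_left hGmul _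
    _ = ∑ T ∈ Ta, R.choose (d-1-T.card) + ∑ T ∈ Tb, R.choose (d-1-T.card) := by
          rw [hTa_sum, hTb_sum]
    _ = ∑ T ∈ T𝒯, R.choose (d-1-T.card) := (sum_union hdisjT).symm
    _ = SS.card := hSS_card.symm
    _ ≤ Miss.card := card_le_card hSS_sub
end Missing

theorem core : ∀ (K d n : ℕ) (F : Finset (Finset ℕ)), 2 ≤ d → 2*d+1 ≤ n →
    (∀ A ∈ F, A ⊆ Icc 1 n) → (∀ A ∈ F, ∀ B ∈ F, (A ∪ B).card ≤ 2*d) →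
    (d ≤ (F.filter (fun A => A.card = d+1)).card) →
    d + n + mu F ≤ K → F.card ≤ bnd n d := by
  intro K
  induction K with
  | zero => intro d n F hd hn hF hun hcnt hK; omega
  | succ K ih =>
    intro d n F hd hn hF hun hcnt hK
    by_cases hbase : n = 2*d+1
    · exact base_case hd hbase hF hun
    have hn2 : 2*d+2 ≤ n := by omega
    -- Step 1: compressions
    by_cases hcomp : ∃ i j : ℕ, (1 ≤ i ∧ i < j ∧ j ≤ n) ∧ 𝓒 {i} {j} F ≠ F
    · obtain ⟨i, j, ⟨hi1, hij, hjn⟩, hne⟩ := hcomp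
      have h1 : ∀ A ∈ 𝓒 {i} {j} F, A ⊆ Icc 1 n :=
        comp_ground (mem_Icc.2 ⟨hi1, by omega⟩) hF
      have h2 := comp_union (i := i) (j := j) hun
      have h3 : d ≤ ((𝓒 {i} {j} F).filter (fun A => A.card = d+1)).card := by
        rw [comp_filter_card (by omega), UV.card_compression]
        exact hcnt
      have h4 : mu (𝓒 {i} {j} F) < mu F := mu_comp_lt hij hne
      have h5 := ih d n (𝓒 {i} {j} F) hd hn h1 h2 h3 (by omega)
      rwa [UV.card_compression] at h5
    push_neg at hcomp
    -- Step 2: push-down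
    by_cases hpd : ∃ A ∈ F, d+2 ≤ A.card ∧ ∃ A' ∈ powersetCard (d+1) A, A' ∉ F
    · obtain ⟨A, hA, hAcard, A', hA'pc, hA'notin⟩ := hpd
      rw [mem_powersetCard] at hA'pc
      obtain ⟨hA'A, hA'card⟩ := hA'pc
      have hA'ne : A' ≠ A := fun h => by rw [h] at hA'card; omega
      have hcard' : (insert A' (F.erase A)).card = F.card := by
        rw [card_insert_of_notMem (fun h => hA'notin (mem_of_mem_erase h)),
          card_erase_of_mem hA]
        have : 1 ≤ F.card := card_pos.2 ⟨A, hA⟩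
        omega
      have hmem' : ∀ X ∈ insert A' (F.erase A), X ⊆ Icc 1 n := by
        intro X hX
        rcases mem_insert.1 hX with rfl | hX
        · exact hA'A.trans (hF A hA)
        · exact hF X (mem_of_mem_erase hX)
      have hun' : ∀ X ∈ insert A' (F.erase A), ∀ Y ∈ insert A' (F.erase A),
          (X ∪ Y).card ≤ 2*d := by
        have haux : ∀ Y ∈ F, (A' ∪ Y).card ≤ 2*d := fun Y hY =>
          le_trans (card_le_card (union_subset_union_left hA'A)) (hun A hA Y hY)
        intro X hX Y hY
        rcases mem_insert.1 hX with hX' | hX' <;> rcases mem_insert.1 hY with hY' | hY'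
        · rw [hX', hY', union_self]; omega
        · rw [hX']; exact haux Y (mem_of_mem_erase hY')
        · rw [hY', union_comm]; exact haux X (mem_of_mem_erase hX')
        · exact hun X (mem_of_mem_erase hX') Y (mem_of_mem_erase hY')
      have hcnt' : d ≤ ((insert A' (F.erase A)).filter (fun X => X.card = d+1)).card := by
        refine le_trans hcnt (card_le_card ?_)
        intro X hX
        obtain ⟨hXF, hXcard⟩ := mem_filter.1 hX
        refine mem_filter.2 ⟨?_, hXcard⟩
        rcases eq_or_ne X A with rfl | hne
        · omega
        · exact mem_insert_of_mem (mem_erase.2 ⟨hne, hXF⟩)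
      have hmu' : mu (insert A' (F.erase A)) < mu F := by
        have hA'e : A' ∉ F.erase A := fun h => hA'notin (mem_of_mem_erase h)
        have h1 : mu (insert A' (F.erase A)) = mu1 A' + mu (F.erase A) :=
          sum_insert hA'e
        have h2 : mu (F.erase A) + mu1 A = mu F := Finset.sum_erase_add F mu1 hA
        have h3 : mu1 A' < mu1 A :=
          mu1_lt_of_ssubset (ssubset_of_subset_of_ne hA'A hA'ne)
        unfold mu at *
        omega
      have h5 := ih d n (insert A' (F.erase A)) hd hn hmem' hun' hcnt' (by omega)
      omega
    push_neg at hpd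
    -- MAIN BRANCH: F is shifted and pushed-down
    have hshiftF : ∀ A ∈ F, ∀ i j : ℕ, 1 ≤ i → i < j → j ∈ A → i ∉ A →
        insert i (A.erase j) ∈ F := by
      intro A hA i j h1 hij hjA hiA
      have hjn : j ≤ n := (mem_Icc.1 (hF A hA hjA)).2
      exact shift_mem (hcomp i j ⟨h1, hij, hjn⟩) hA hjA hiA
    set F0 := F.filter (fun A => n ∉ A) with hF0
    set F1 := (F.filter (fun A => n ∈ A)).image (fun A => A.erase n) with hF1def
    have herase_inj : Set.InjOn (fun A : Finset ℕ => A.erase n)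
        ↑(F.filter (fun A => n ∈ A)) := by
      intro X hX Y hY hXY
      rw [mem_coe, mem_filter] at hX hY
      have h1 : insert n (X.erase n) = insert n (Y.erase n) := by
        have hXY' : X.erase n = Y.erase n := hXY
        rw [hXY']
      rwa [insert_erase hX.2, insert_erase hY.2] at h1
    have hsplitcard : F.card = F0.card + F1.card := by
      rw [hF1def, card_image_of_injOn herase_inj, hF0]
      have hdisj0 : Disjoint (F.filter (fun A => n ∉ A)) (F.filter (fun A => n ∈ A)) := by
        rw [disjoint_left]
        intro X h1 h2
        exact (mem_filter.1 h1).2 (mem_filter.1 h2).2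
      have hcover : F.filter (fun A => n ∉ A) ∪ F.filter (fun A => n ∈ A) = F := by
        ext X
        simp only [mem_union, mem_filter]
        constructor
        · rintro (⟨h, -⟩ | ⟨h, -⟩) <;> exact h
        · intro h
          by_cases hn' : n ∈ X
          · exact Or.inr ⟨h, hn'⟩
          · exact Or.inl ⟨h, hn'⟩
      have := card_union_of_disjoint hdisj0
      rw [hcover] at this
      omega
    have hF1insert : ∀ X ∈ F1, insert n X ∈ F ∧ n ∉ X := by
      intro X hX
      obtain ⟨A, hA, rfl⟩ := mem_image.1 hX
      obtain ⟨hAF, hnA⟩ := mem_filter.1 hA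
      rw [insert_erase hnA]
      exact ⟨hAF, notMem_erase n A⟩
    have hF1sub : ∀ X ∈ F1, X ⊆ Icc 1 (n-1) := by
      intro X hX x hx
      obtain ⟨A, hA, rfl⟩ := mem_image.1 hX
      obtain ⟨hAF, -⟩ := mem_filter.1 hA
      have h1 := mem_Icc.1 (hF A hAF (mem_of_mem_erase hx))
      have h2 : x ≠ n := (mem_erase.1 hx).1
      rw [mem_Icc]
      omega
    have hF0sub : ∀ A ∈ F0, A ⊆ Icc 1 (n-1) := by
      intro A hA x hx
      obtain ⟨hAF, hnA⟩ := mem_filter.1 hA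
      have h1 := mem_Icc.1 (hF A hAF hx)
      have h2 : x ≠ n := fun h => hnA (h ▸ hx)
      rw [mem_Icc]
      omega
    have hF0F : ∀ A ∈ F0, A ∈ F := fun A hA => (mem_filter.1 hA).1
    have hF0un : ∀ A ∈ F0, ∀ B ∈ F0, (A ∪ B).card ≤ 2*d :=
      fun A hA B hB => hun A (hF0F A hA) B (hF0F B hB)
    -- G' and S4
    set G' := F0.filter (fun B => B.card = d+1) with hG'def
    have hG'mem : ∀ B ∈ G', B ∈ F ∧ n ∉ B ∧ B.card = d+1 := by
      intro B hB
      obtain ⟨hB0, hBc⟩ := mem_filter.1 hB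
      obtain ⟨hBF, hnB⟩ := mem_filter.1 hB0
      exact ⟨hBF, hnB, hBc⟩
    have hS4 : d ≤ G'.card := by
      by_cases hall : ∀ B ∈ F.filter (fun A => A.card = d+1), n ∉ B
      · refine le_trans hcnt (card_le_card ?_)
        intro X hX
        obtain ⟨hXF, hXc⟩ := mem_filter.1 hX
        exact mem_filter.2 ⟨mem_filter.2 ⟨hXF, hall X hX⟩, hXc⟩
      · push_neg at hall
        obtain ⟨B, hBfil, hnB⟩ := hall
        obtain ⟨hBF, hBcard⟩ := mem_filter.1 hBfil
        have hXcard : (B.erase n).card = d := by rw [card_erase_of_mem hnB]; omega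
        have hXsub : B.erase n ⊆ Icc 1 (n-1) := by
          intro x hx
          have h1 := mem_Icc.1 (hF B hBF (mem_of_mem_erase hx))
          have h2 : x ≠ n := (mem_erase.1 hx).1
          rw [mem_Icc]; omega
        have hmap : ∀ i ∈ Icc 1 (n-1) \ B.erase n, insert i (B.erase n) ∈ G' := by
          intro i hi
          obtain ⟨hiI, hiX⟩ := mem_sdiff.1 hi
          have hiIcc := mem_Icc.1 hiI
          have hiB : i ∉ B := by
            intro h
            exact hiX (mem_erase.2 ⟨by omega, h⟩)
          have h3 := hshiftF B hBF i n (by omega) (by omega) hnB hiB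
          refine mem_filter.2 ⟨mem_filter.2 ⟨h3, ?_⟩, ?_⟩
          · rw [mem_insert]
            push_neg
            exact ⟨by omega, notMem_erase n B⟩
          · rw [card_insert_of_notMem hiX, hXcard]
        have hinj : Set.InjOn (fun i => insert i (B.erase n)) ↑(Icc 1 (n-1) \ B.erase n) := by
          intro a ha b hb hab
          rw [mem_coe, mem_sdiff] at ha hb
          have hab' : insert a (B.erase n) = insert b (B.erase n) := hab
          have h1 : a ∈ insert b (B.erase n) := hab' ▸ mem_insert_self a _
          rcases mem_insert.1 h1 with h | h
          · exact h
          · exact absurd h ha.2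
        have hcardsd : (Icc 1 (n-1) \ B.erase n).card = (n-1) - d := by
          rw [card_sdiff_of_subset hXsub, hXcard, Nat.card_Icc]
          omega
        calc d ≤ (Icc 1 (n-1) \ B.erase n).card := by omega
        _ = ((Icc 1 (n-1) \ B.erase n).image (fun i => insert i (B.erase n))).card :=
            (card_image_of_injOn hinj).symm
        _ ≤ G'.card := by
            apply card_le_card
            intro X hX
            obtain ⟨i, hi, rfl⟩ := mem_image.1 hX
            exact hmap i hi
    -- F0 recursion
    have hmuF0 : mu F0 ≤ mu F := Finset.sum_le_sum_of_subset (filter_subset _ _)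
    have hF0card : F0.card ≤ bnd (n-1) d :=
      ih d (n-1) F0 hd (by omega) hF0sub hF0un hS4 (by omega)
    -- F1 union bound (2(d-1)-union)
    have hF1un : ∀ X ∈ F1, ∀ Y ∈ F1, (X ∪ Y).card ≤ 2*(d-1) := by
      intro X hX Y hY
      obtain ⟨hXF, hnX⟩ := hF1insert X hX
      obtain ⟨hYF, hnY⟩ := hF1insert Y hY
      have hnXY : n ∉ X ∪ Y := by rw [mem_union]; push_neg; exact ⟨hnX, hnY⟩
      have hXY : ((insert n X) ∪ (insert n Y)).card ≤ 2*d := hun _ hXF _ hYF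
      have he : (insert n X) ∪ (insert n Y) = insert n (X ∪ Y) := by
        rw [insert_union, union_insert, insert_idem]
      rw [he, card_insert_of_notMem hnXY] at hXY
      by_contra hcon
      push_neg at hcon
      have hXYcard : (X ∪ Y).card = 2*d - 1 := by omega
      have hXYsub : X ∪ Y ⊆ Icc 1 (n-1) := union_subset (hF1sub X hX) (hF1sub Y hY)
      obtain ⟨i, hiI, hiXY⟩ : ∃ i ∈ Icc 1 (n-1), i ∉ X ∪ Y := by
        by_contra hcon2
        push_neg at hcon2
        have := card_le_card hcon2
        rw [Nat.card_Icc] at this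
        omega
      have hiIcc := mem_Icc.1 hiI
      have hiX : i ∉ X := fun h => hiXY (mem_union_left _ h)
      have hin : i ∉ insert n X := by
        rw [mem_insert]; push_neg; exact ⟨by omega, hiX⟩
      have hinsX : insert i X ∈ F := by
        have h := hshiftF (insert n X) hXF i n (by omega) (by omega)
          (mem_insert_self n X) hin
        rwa [erase_insert hnX] at h
      have hbig := hun _ hinsX _ hYF
      have hsup : insert i (insert n (X ∪ Y)) ⊆ insert i X ∪ insert n Y := by
        intro x hx
        rcases mem_insert.1 hx with rfl | hx
        · exact mem_union_left _ (mem_insert_self _ _)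
        rcases mem_insert.1 hx with rfl | hx
        · exact mem_union_right _ (mem_insert_self _ _)
        rcases mem_union.1 hx with hx | hx
        · exact mem_union_left _ (mem_insert_of_mem hx)
        · exact mem_union_right _ (mem_insert_of_mem hx)
      have hc2 : (insert i (insert n (X ∪ Y))).card = 2*d + 1 := by
        rw [card_insert_of_notMem, card_insert_of_notMem hnXY]
        · omega
        · rw [mem_insert]; push_neg; exact ⟨by omega, hiXY⟩
      have := card_le_card hsup
      omega
    have hF1size : ∀ X ∈ F1, X.card ≤ 2*(d-1) := by
      intro X hX
      have := hF1un X hX X hX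
      rwa [union_self] at this
    -- push-down property for F1
    have hPD : (∃ X ∈ F1, d+1 ≤ X.card) →
        d+1 ≤ (F1.filter (fun X => X.card = d)).card := by
      rintro ⟨X, hX, hXcard⟩
      obtain ⟨hXF, hnX⟩ := hF1insert X hX
      have hsub : powersetCard d X ⊆ F1.filter (fun Y => Y.card = d) := by
        intro σ hσ
        obtain ⟨hσX, hσcard⟩ := mem_powersetCard.1 hσ
        have hnσ : n ∉ σ := fun h => hnX (hσX h)
        have h1 : insert n σ ⊆ insert n X := insert_subset_insert _ hσX
        have h2 : (insert n σ).card = d+1 := by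
          rw [card_insert_of_notMem hnσ, hσcard]
        have hAc : (insert n X).card = X.card + 1 := card_insert_of_notMem hnX
        have h3 : insert n σ ∈ F := by
          apply hpd (insert n X) hXF (by omega)
          exact mem_powersetCard.2 ⟨h1, h2⟩
        refine mem_filter.2 ⟨?_, hσcard⟩
        rw [hF1def, mem_image]
        refine ⟨insert n σ, mem_filter.2 ⟨h3, mem_insert_self _ _⟩, ?_⟩
        rw [erase_insert hnσ]
      calc d+1 = (d+1).choose d := (Nat.choose_succ_self_right d).symm
      _ ≤ X.card.choose d := Nat.choose_le_choose d hXcard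
      _ = (powersetCard d X).card := (card_powersetCard d X).symm
      _ ≤ _ := card_le_card hsub
    -- case split on d and ρ
    by_cases hd2 : d = 2
    · -- d = 2
      subst hd2
      obtain ⟨B1, hB1, B2, hB2, hB12⟩ := one_lt_card.1 (by omega : 1 < G'.card)
      have hkey : ∀ X ∈ F1, X ⊆ B1 ∩ B2 := by
        intro X hX
        obtain ⟨hXF, hnX⟩ := hF1insert X hX
        have hsub : ∀ Bj ∈ G', X ⊆ Bj := by
          intro Bj hBj
          obtain ⟨hBjF, hnBj, hBjcard⟩ := hG'mem Bj hBj
          have h1 := hun _ hXF _ hBjF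
          have hnXB : n ∉ X ∪ Bj := by rw [mem_union]; push_neg; exact ⟨hnX, hnBj⟩
          have h2 : (insert n X) ∪ Bj = insert n (X ∪ Bj) := insert_union n X Bj
          rw [h2, card_insert_of_notMem hnXB] at h1
          have h5 : Bj ⊆ X ∪ Bj := subset_union_right
          have h6 := eq_of_subset_of_card_le h5 (by omega)
          intro x hx
          rw [h6]
          exact mem_union_left _ hx
        exact subset_inter (hsub B1 hB1) (hsub B2 hB2)
      have hinter_card : (B1 ∩ B2).card ≤ 2 := by
        have hssub : B1 ∩ B2 ⊂ B1 := by
          rw [Finset.ssubset_iff_subset_ne]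
          refine ⟨inter_subset_left, ?_⟩
          intro hcon
          apply hB12
          have hsub12 : B1 ⊆ B2 := inter_eq_left.1 hcon
          exact eq_of_subset_of_card_le hsub12
            (le_of_eq ((hG'mem B2 hB2).2.2.trans (hG'mem B1 hB1).2.2.symm))
        have h1 := card_lt_card hssub
        have h2 := (hG'mem B1 hB1).2.2
        omega
      have hF1card : F1.card ≤ 4 := by
        have hsub : F1 ⊆ (B1 ∩ B2).powerset := fun X hX => mem_powerset.2 (hkey X hX)
        calc F1.card ≤ ((B1 ∩ B2).powerset).card := card_le_card hsub
        _ = 2^((B1 ∩ B2).card) := card_powerset _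
        _ ≤ 2^2 := Nat.pow_le_pow_right (by norm_num) hinter_card
        _ = 4 := by norm_num
      -- arithmetic: bnd (n-1) 2 + 4 ≤ bnd n 2
      have hps : ∑ i ∈ range 3, n.choose i
          = ∑ i ∈ range 3, (n-1).choose i + ∑ i ∈ range 2, (n-1).choose i := by
        have := sum_pascal (n-1) 2
        rwa [show n - 1 + 1 = n by omega] at this
      have hS1 : ∑ i ∈ range 2, (n-1).choose i = n := by
        rw [Finset.sum_range_succ, Finset.sum_range_one]
        rw [Nat.choose_zero_right, Nat.choose_one_right]
        omega
      have hpa : (n-2).choose 2 = (n-3).choose 2 + (n-3).choose 1 := by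
        have := pascal_choose (n-2) 2 (by omega) (by omega)
        rwa [show n - 2 - 1 = n - 3 by omega, show (2:ℕ) - 1 = 1 by omega] at this
      have hch1 : (n-3).choose 1 = n-3 := Nat.choose_one_right _
      have hsafe1 : (n-2).choose 2 ≤ ∑ i ∈ range 3, n.choose i :=
        le_trans (Nat.choose_le_choose 2 (by omega)) (choose_le_sum n 2)
      have hsafe2 : (n-1-2).choose 2 ≤ ∑ i ∈ range 3, (n-1).choose i :=
        le_trans (Nat.choose_le_choose 2 (by omega)) (choose_le_sum (n-1) 2)
      have hb0 : bnd (n-1) 2 = (∑ i ∈ range 3, (n-1).choose i) - (n-1-2).choose 2 + (n-1-2) :=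
        rfl
      have hbn : bnd n 2 = (∑ i ∈ range 3, n.choose i) - (n-2).choose 2 + (n-2) := rfl
      have he3 : n - 1 - 2 = n - 3 := by omega
      rw [hbn]
      rw [hb0, he3] at hF0card
      rw [he3] at hsafe2
      omega
    · have hd3 : 3 ≤ d := by omega
      by_cases hρ2 : d - 1 ≤ (F1.filter (fun X => X.card = d)).card
      · -- case b1 : recurse on F1 at level d-1
        have hF1cnt : d - 1 ≤ (F1.filter (fun X => X.card = (d-1)+1)).card := by
          rwa [show d - 1 + 1 = d by omega]
        have hmuF1 : mu F1 ≤ mu F := by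
          have h1 : mu F1 = ∑ A ∈ F.filter (fun A => n ∈ A), mu1 (A.erase n) := by
            rw [hF1def]
            exact sum_image (by
              intro x hx y hy hxy
              exact herase_inj (by simpa using hx) (by simpa using hy) hxy)
          rw [h1]
          calc ∑ A ∈ F.filter (fun A => n ∈ A), mu1 (A.erase n)
              ≤ ∑ A ∈ F.filter (fun A => n ∈ A), mu1 A := by
                apply Finset.sum_le_sum
                intro A hA
                exact Finset.sum_le_sum_of_subset (erase_subset n A)
          _ ≤ mu F := Finset.sum_le_sum_of_subset (filter_subset _ _)
        have hF1bound : F1.card ≤ bnd (n-1) (d-1) :=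
          ih (d-1) (n-1) F1 (by omega) (by omega) hF1sub
            (by
              intro X hX Y hY
              have := hF1un X hX Y hY
              omega)
            hF1cnt (by omega)
        -- arithmetic
        have hps : ∑ i ∈ range (d+1), n.choose i
            = ∑ i ∈ range (d+1), (n-1).choose i + ∑ i ∈ range d, (n-1).choose i := by
          have := sum_pascal (n-1) d
          rwa [show n - 1 + 1 = n by omega] at this
        have hpa : (n-d).choose d = (n-d-1).choose d + (n-d-1).choose (d-1) := by
          have := pascal_choose (n-d) d (by omega) (by omega)
          rwa [show n - d - 1 = n - d - 1 from rfl] at this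
        have hpa2 : (n-d).choose (d-1)
            = (n-d-1).choose (d-1) + (n-d-1).choose (d-2) := by
          have := pascal_choose (n-d) (d-1) (by omega) (by omega)
          rwa [show d - 1 - 1 = d - 2 by omega] at this
        have hc : n - d - 1 ≤ (n-d-1).choose (d-2) :=
          le_choose (n-d-1) (d-2) (by omega) (by omega)
        have hsafe1 : (n-d).choose d ≤ ∑ i ∈ range (d+1), n.choose i :=
          le_trans (Nat.choose_le_choose d (by omega)) (choose_le_sum n d)
        have hsafe2 : (n-1-d).choose d ≤ ∑ i ∈ range (d+1), (n-1).choose i :=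
          le_trans (Nat.choose_le_choose d (by omega)) (choose_le_sum (n-1) d)
        have hsafe3 : (n-d).choose (d-1) ≤ ∑ i ∈ range d, (n-1).choose i := by
          calc (n-d).choose (d-1) ≤ (n-1).choose (d-1) :=
              Nat.choose_le_choose (d-1) (by omega)
          _ ≤ ∑ i ∈ range d, (n-1).choose i :=
              Finset.single_le_sum (f := fun i => (n-1).choose i)
                (fun _ _ => Nat.zero_le _) (mem_range.2 (by omega))
        have hbn : bnd n d
            = (∑ i ∈ range (d+1), n.choose i) - (n-d).choose d + (n-d) := rfl
        have hb0 : bnd (n-1) d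
            = (∑ i ∈ range (d+1), (n-1).choose i) - (n-1-d).choose d + (n-1-d) := rfl
        have hb1 : bnd (n-1) (d-1)
            = (∑ i ∈ range d, (n-1).choose i) - (n-d).choose (d-1) + (n-d) := by
          rw [bnd, show d - 1 + 1 = d by omega, show n - 1 - (d-1) = n - d by omega]
        have he4 : n - 1 - d = n - d - 1 := by omega
        rw [hbn]
        rw [hb0, he4] at hF0card
        rw [he4] at hsafe2
        rw [hb1] at hF1bound
        omega
      · -- case b2
        push_neg at hρ2
        have hρ : (F1.filter (fun X => X.card = d)).card ≤ d - 2 := by omega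
        have hnobig : ∀ X ∈ F1, X.card ≤ d := by
          intro X hX
          by_contra hcon
          push_neg at hcon
          have := hPD ⟨X, hX, hcon⟩
          omega
        -- G' properties on ground Icc 1 (n-1)
        have hG'sub : ∀ B ∈ G', B ⊆ Icc 1 (n-1) := fun B hB => hF0sub B (mem_filter.1 hB).1
        have hG'card : ∀ B ∈ G', B.card = d+1 := fun B hB => (hG'mem B hB).2.2
        have hG'shift : ∀ B ∈ G', ∀ i j : ℕ, 1 ≤ i → i < j → j ∈ B → i ∉ B →
            insert i (B.erase j) ∈ G' := by
          intro B hB i j h1 hij hjB hiB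
          obtain ⟨hBF, hnB, hBc⟩ := hG'mem B hB
          have hjn : j ≤ n - 1 := (mem_Icc.1 (hG'sub B hB hjB)).2
          have h3 := hshiftF B hBF i j h1 hij hjB hiB
          refine mem_filter.2 ⟨mem_filter.2 ⟨h3, ?_⟩, ?_⟩
          · rw [mem_insert]
            push_neg
            exact ⟨by omega, fun h => hnB (mem_of_mem_erase h)⟩
          · rw [card_insert_of_notMem (fun h => hiB (mem_of_mem_erase h)),
              card_erase_of_mem hjB, hBc]
            omega
        set Miss := (powersetCard (d-1) (Icc 1 (n-1))).filter
          (fun S => ∃ B ∈ G', Disjoint S B) with hMissdef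
        have hMlow : (n-1-d).choose (d-1) + (F1.filter (fun X => X.card = d)).card
            ≤ Miss.card + 1 := by
          by_cases hρ1 : (F1.filter (fun X => X.card = d)).card ≤ 1
          · have hml := missing_lower hd3 (by omega : 2*d+1 ≤ n-1) hG'sub hG'card hS4 hG'shift
            rw [← hMissdef] at hml
            omega
          · obtain ⟨S1, hS1, S2, hS2, hSne⟩ := one_lt_card.1 (by omega :
              1 < (F1.filter (fun X => X.card = d)).card)
            obtain ⟨hS1F1, hS1c⟩ := mem_filter.1 hS1
            obtain ⟨hS2F1, hS2c⟩ := mem_filter.1 hS2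
            have hcone : ∀ S0, S0 ∈ F1 → S0.card = d →
                ∀ i ∈ Icc 1 (n-1), i ∉ S0 → insert i S0 ∈ G' := by
              intro S0 hS0 hS0c i hiI hiS0
              obtain ⟨hS0F, hnS0⟩ := hF1insert S0 hS0
              have hiIcc := mem_Icc.1 hiI
              have hin : i ∉ insert n S0 := by
                rw [mem_insert]; push_neg; exact ⟨by omega, hiS0⟩
              have h := hshiftF (insert n S0) hS0F i n hiIcc.1 (by omega)
                (mem_insert_self n S0) hin
              rw [erase_insert hnS0] at h
              refine mem_filter.2 ⟨mem_filter.2 ⟨h, ?_⟩, ?_⟩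
              · rw [mem_insert]; push_neg; exact ⟨by omega, hnS0⟩
              · rw [card_insert_of_notMem hiS0, hS0c]
            have hlow := missing_lower_two (G := G') hd3 (by omega : 2*d+1 ≤ n-1)
              (hF1sub S1 hS1F1) (hF1sub S2 hS2F1) hS1c hS2c hSne
              (hcone S1 hS1F1 hS1c) (hcone S2 hS2F1 hS2c)
            rw [← hMissdef] at hlow
            have hcc : d - 1 ≤ (n-1-d-1).choose (d-2) := by
              have h := succ_le_choose (n-1-d-1) (d-2) (by omega)
              rwa [show d - 2 + 1 = d - 1 by omega] at h
            omega
        have hdisj19 : Disjoint (F1.filter (fun X => X.card = d-1)) Miss := by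
          rw [disjoint_left]
          intro S hS hSM
          obtain ⟨hSF1, hScard⟩ := mem_filter.1 hS
          obtain ⟨hSpc, B, hBG', hdisjSB⟩ := mem_filter.1 hSM
          obtain ⟨hBF, hnB, hBc⟩ := hG'mem B hBG'
          obtain ⟨hSF, hnS⟩ := hF1insert S hSF1
          have h1 := hun _ hSF _ hBF
          have hnSB : n ∉ S ∪ B := by rw [mem_union]; push_neg; exact ⟨hnS, hnB⟩
          rw [insert_union, card_insert_of_notMem hnSB,
            card_union_of_disjoint hdisjSB, hScard, hBc] at h1
          omega
        have hcount : F1.card = (F1.filter (fun X => X.card ≤ d-2)).card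
            + (F1.filter (fun X => X.card = d-1)).card
            + (F1.filter (fun X => X.card = d)).card := by
          have hdisjA : Disjoint (F1.filter (fun X => X.card ≤ d-2))
              (F1.filter (fun X => X.card = d-1) ∪ F1.filter (fun X => X.card = d)) := by
            rw [disjoint_left]
            intro X h1 h2
            have hc1 := (mem_filter.1 h1).2
            rcases mem_union.1 h2 with h | h
            · have := (mem_filter.1 h).2; omega
            · have := (mem_filter.1 h).2; omega
          have hdisjB : Disjoint (F1.filter (fun X => X.card = d-1))
              (F1.filter (fun X => X.card = d)) := by
            rw [disjoint_left]
            intro X h1 h2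
            have hc1 := (mem_filter.1 h1).2
            have hc2 := (mem_filter.1 h2).2
            omega
          have hcover : F1.filter (fun X => X.card ≤ d-2)
              ∪ (F1.filter (fun X => X.card = d-1) ∪ F1.filter (fun X => X.card = d))
              = F1 := by
            ext X
            simp only [mem_union, mem_filter]
            constructor
            · rintro (⟨h,-⟩|⟨h,-⟩|⟨h,-⟩) <;> exact h
            · intro h
              have := hnobig X h
              by_cases h1 : X.card ≤ d-2
              · exact Or.inl ⟨h, h1⟩
              · by_cases h2 : X.card = d-1
                · exact Or.inr (Or.inl ⟨h, h2⟩)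
                · exact Or.inr (Or.inr ⟨h, by omega⟩)
          have hu1 := card_union_of_disjoint hdisjA
          rw [hcover, card_union_of_disjoint hdisjB] at hu1
          omega
        have hc1 : (F1.filter (fun X => X.card ≤ d-2)).card
            ≤ ∑ i ∈ range (d-1), (n-1).choose i := by
          have hsub : F1.filter (fun X => X.card ≤ d-2)
              ⊆ (range (d-1)).biUnion (fun i => powersetCard i (Icc 1 (n-1))) := by
            intro X hX
            obtain ⟨hXF1, hXc⟩ := mem_filter.1 hX
            exact mem_biUnion.2 ⟨X.card, mem_range.2 (by omega),
              mem_powersetCard.2 ⟨hF1sub X hXF1, rfl⟩⟩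
          calc (F1.filter (fun X => X.card ≤ d-2)).card
              ≤ ((range (d-1)).biUnion (fun i => powersetCard i (Icc 1 (n-1)))).card :=
                card_le_card hsub
          _ ≤ ∑ i ∈ range (d-1), (powersetCard i (Icc 1 (n-1))).card := card_biUnion_le
          _ = ∑ i ∈ range (d-1), (n-1).choose i := by
              apply sum_congr rfl
              intro i hi
              rw [card_powersetCard, Nat.card_Icc, show n - 1 + 1 - 1 = n - 1 by omega]
        have hc2 : (F1.filter (fun X => X.card = d-1)).card + Miss.card
            ≤ (n-1).choose (d-1) := by
          have hsub : F1.filter (fun X => X.card = d-1) ∪ Miss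
              ⊆ powersetCard (d-1) (Icc 1 (n-1)) := by
            intro X hX
            rcases mem_union.1 hX with hX | hX
            · obtain ⟨hXF1, hXc⟩ := mem_filter.1 hX
              exact mem_powersetCard.2 ⟨hF1sub X hXF1, hXc⟩
            · exact (mem_filter.1 hX).1
          have h1 := card_union_of_disjoint hdisj19
          have h2 := card_le_card hsub
          rw [card_powersetCard, Nat.card_Icc, show n-1+1-1 = n-1 by omega] at h2
          omega
        have hps : ∑ i ∈ range (d+1), n.choose i
            = ∑ i ∈ range (d+1), (n-1).choose i + ∑ i ∈ range d, (n-1).choose i := by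
          have := sum_pascal (n-1) d
          rwa [show n - 1 + 1 = n by omega] at this
        have hpa : (n-d).choose d = (n-d-1).choose d + (n-d-1).choose (d-1) := by
          have := pascal_choose (n-d) d (by omega) (by omega)
          rwa [show d - 1 = d - 1 from rfl] at this
        have hS1sum : ∑ i ∈ range d, (n-1).choose i
            = ∑ i ∈ range (d-1), (n-1).choose i + (n-1).choose (d-1) := by
          have := Finset.sum_range_succ (fun i => (n-1).choose i) (d-1)
          rwa [show d - 1 + 1 = d by omega] at this
        have hsafe1 : (n-d).choose d ≤ ∑ i ∈ range (d+1), n.choose i :=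
          le_trans (Nat.choose_le_choose d (by omega)) (choose_le_sum n d)
        have hsafe2 : (n-1-d).choose d ≤ ∑ i ∈ range (d+1), (n-1).choose i :=
          le_trans (Nat.choose_le_choose d (by omega)) (choose_le_sum (n-1) d)
        have hb0 : bnd (n-1) d
            = (∑ i ∈ range (d+1), (n-1).choose i) - (n-1-d).choose d + (n-1-d) := rfl
        have hbn : bnd n d
            = (∑ i ∈ range (d+1), n.choose i) - (n-d).choose d + (n-d) := rfl
        have he4 : n - 1 - d = n - d - 1 := by omega
        rw [hbn]
        rw [hb0, he4] at hF0card
        rw [he4] at hsafe2 hMlow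
        omega
end Stmt15

theorem stmt_15 (n d r : ℕ) (hd : 2 ≤ d) (hn : 2 * d + 2 ≤ n)
    (hrd : d ≤ r) (hrn : r ≤ n - d)
    (F : Finset (Finset ℕ))
    (hF : ∀ A ∈ F, A ⊆ Finset.Icc 1 n)
    (hunion : ∀ A ∈ F, ∀ B ∈ F, (A ∪ B).card ≤ 2 * d)
    (hFd1 : r ≤ (F.filter (fun A => A.card = d + 1)).card) :
    F.card ≤ (∑ i ∈ Finset.range (d + 1), n.choose i) - (n - d).choose d + (n - d) := by
  have h := Stmt15.core (d + n + Stmt15.mu F) d n F hd (by omega) hF hunion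
    (le_trans hrd hFd1) le_rfl
  exact h
end

section
/- Let k ≥ 2, r ≥ 1, n ≥ 2k, and let F, G ⊆ binom([n], k) be cross-intersecting families with |G| ≥ |F| ≥ r and r ≤ k - 1. Then |F| + |G| ≤ C(n,k) - C(n-k+1,k) + C(n-k-r+1, k-r) + r. -/
attribute [-instance] instDecidableEqFin

open Finset Nat

namespace CrossInt

/-- The family of `b`-subsets of members of `𝒜` ("covered" sets). -/
def cov (b : ℕ) (𝒜 : Finset (Finset ℕ)) : Finset (Finset ℕ) := 𝒜.sup (Finset.powersetCard b)

lemma mem_cov {b : ℕ} {𝒜 : Finset (Finset ℕ)} {B : Finset ℕ} :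
    B ∈ cov b 𝒜 ↔ ∃ A ∈ 𝒜, B ⊆ A ∧ B.card = b := by
  simp [cov, Finset.mem_sup, Finset.mem_powersetCard]

lemma cov_mono {b : ℕ} {𝒜 ℬ : Finset (Finset ℕ)} (h : 𝒜 ⊆ ℬ) : cov b 𝒜 ⊆ cov b ℬ :=
  Finset.le_iff_subset.1 (Finset.sup_mono h)

/-- Colex initial segment: first `m` colex `a`-subsets of `range ν` (valid for `m ≤ ν.choose a`). -/
def seg : ℕ → ℕ → ℕ → Finset (Finset ℕ)
  | a, 0, m => if a = 0 ∧ 1 ≤ m then {∅} else ∅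
  | a, ν+1, m =>
      if m ≤ ν.choose a then seg a ν m
      else (Finset.range ν).powersetCard a ∪ (seg (a-1) ν (m - ν.choose a)).image (insert ν)

lemma seg_succ (a ν m : ℕ) : seg a (ν+1) m =
    if m ≤ ν.choose a then seg a ν m
    else (Finset.range ν).powersetCard a ∪ (seg (a-1) ν (m - ν.choose a)).image (insert ν) := rfl

lemma seg_else_pos {a ν m : ℕ} (hm : m ≤ (ν+1).choose a) (h : ¬ m ≤ ν.choose a) :
    1 ≤ a ∧ m - ν.choose a ≤ ν.choose (a-1) := by
  rcases Nat.eq_zero_or_pos a with rfl | ha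
  · simp at h hm; omega
  · constructor
    · exact ha
    · have : (ν+1).choose a = ν.choose (a-1) + ν.choose a := by
        obtain ⟨a', rfl⟩ := Nat.exists_eq_add_of_le ha
        simpa [Nat.add_comm] using Nat.choose_succ_succ ν a'
      omega

lemma seg_subset_powersetCard : ∀ a ν m, m ≤ ν.choose a →
    seg a ν m ⊆ (Finset.range ν).powersetCard a := by
  intro a ν
  induction ν generalizing a with
  | zero =>
    intro m hm A hA
    simp only [seg] at hA
    split_ifs at hA with h
    · simp only [Finset.mem_singleton] at hA
      subst hA; simp [h.1]
    · simp at hA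
  | succ ν ih =>
    intro m hm A hA
    simp only [seg] at hA
    split_ifs at hA with h
    · exact (Finset.powersetCard_mono (Finset.range_subset_range.2 (Nat.le_succ ν))) (ih a m h hA)
    · obtain ⟨ha1, hq⟩ := seg_else_pos hm h
      rcases Finset.mem_union.1 hA with hA | hA
      · exact (Finset.powersetCard_mono (Finset.range_subset_range.2 (Nat.le_succ ν))) hA
      · rcases Finset.mem_image.1 hA with ⟨S, hS, rfl⟩
        have hS' := Finset.mem_powersetCard.1 (ih (a-1) (m - ν.choose a) hq hS)
        have hν : ν ∉ S := fun hc => by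
          have := hS'.1 hc; simp at this
        rw [Finset.mem_powersetCard]
        constructor
        · intro x hx
          rcases Finset.mem_insert.1 hx with rfl | hx
          · simp
          · exact Finset.mem_range.2 (Nat.lt_succ_of_lt (Finset.mem_range.1 (hS'.1 hx)))
        · rw [Finset.card_insert_of_notMem hν, hS'.2]
          omega

lemma seg_card : ∀ a ν m, m ≤ ν.choose a → (seg a ν m).card = m := by
  intro a ν
  induction ν generalizing a with
  | zero =>
    intro m hm
    simp only [seg]
    rcases Nat.eq_zero_or_pos a with rfl | ha
    · simp only [Nat.choose_zero_right] at hm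
      interval_cases m <;> simp
    · have hc : (0:ℕ).choose a = 0 := Nat.choose_eq_zero_of_lt ha
      rw [hc] at hm
      interval_cases m
      have : ¬ (a = 0 ∧ (1:ℕ) ≤ 0) := by omega
      simp [this]
  | succ ν ih =>
    intro m hm
    simp only [seg]
    split_ifs with h
    · exact ih a m h
    · obtain ⟨ha1, hq⟩ := seg_else_pos hm h
      have hdisj : Disjoint ((Finset.range ν).powersetCard a)
          ((seg (a-1) ν (m - ν.choose a)).image (insert ν)) := by
        rw [Finset.disjoint_right]
        rintro A hA hA'
        rcases Finset.mem_image.1 hA with ⟨S, hS, rfl⟩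
        have := (Finset.mem_powersetCard.1 hA').1 (Finset.mem_insert_self ν S)
        simp at this
      rw [Finset.card_union_of_disjoint hdisj, Finset.card_powersetCard, Finset.card_range]
      have hinj : Set.InjOn (insert ν) ((seg (a-1) ν (m - ν.choose a)) : Set (Finset ℕ)) := by
        intro S hS T hT hST
        have hSs := Finset.mem_powersetCard.1 (seg_subset_powersetCard _ _ _ hq hS)
        have hTs := Finset.mem_powersetCard.1 (seg_subset_powersetCard _ _ _ hq hT)
        have hνS : ν ∉ S := fun hc => by have := hSs.1 hc; simp at this
        have hνT : ν ∉ T := fun hc => by have := hTs.1 hc; simp at this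
        have : (insert ν S).erase ν = (insert ν T).erase ν := by rw [hST]
        rwa [Finset.erase_insert hνS, Finset.erase_insert hνT] at this
      rw [Finset.card_image_of_injOn hinj, ih (a-1) _ hq]
      omega

lemma seg_full (a ν : ℕ) : seg a ν (ν.choose a) = (Finset.range ν).powersetCard a := by
  apply Finset.eq_of_subset_of_card_le (seg_subset_powersetCard _ _ _ le_rfl)
  rw [seg_card _ _ _ le_rfl, Finset.card_powersetCard, Finset.card_range]

lemma seg_stable {a ν₁ ν₂ m : ℕ} (hν : ν₁ ≤ ν₂) (hm : m ≤ ν₁.choose a) :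
    seg a ν₂ m = seg a ν₁ m := by
  induction ν₂, hν using Nat.le_induction with
  | base => rfl
  | succ ν₂ hν ih =>
    have h2 : m ≤ ν₂.choose a := hm.trans (Nat.choose_mono a hν)
    simp only [seg, if_pos h2]
    exact ih

lemma seg_mono : ∀ a ν m m', m ≤ m' → m' ≤ ν.choose a → seg a ν m ⊆ seg a ν m' := by
  intro a ν
  induction ν generalizing a with
  | zero =>
    intro m m' hmm hm'
    rcases Nat.eq_zero_or_pos a with rfl | ha
    · simp only [Nat.choose_zero_right] at hm'
      interval_cases m' <;> interval_cases m <;> simp [seg]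
    · have hc : (0:ℕ).choose a = 0 := Nat.choose_eq_zero_of_lt ha
      have : m = 0 := by omega
      have : m' = 0 := by omega
      subst_vars
      exact Finset.Subset.rfl
  | succ ν ih =>
    intro m m' hmm hm'
    simp only [seg]
    split_ifs with h1 h2 h2
    · exact ih a m m' hmm h2
    · intro A hA
      exact Finset.mem_union_left _ (seg_subset_powersetCard a ν m h1 hA)
    · omega
    · obtain ⟨ha1, hq'⟩ := seg_else_pos hm' h2
      apply Finset.union_subset_union Finset.Subset.rfl
      exact Finset.image_subset_image (ih (a-1) _ _ (by omega) hq')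

lemma insert_lt_insert_iff {ν : ℕ} {S T : Finset ℕ} (hS : ν ∉ S) (hT : ν ∉ T) :
    toColex (insert ν S) < toColex (insert ν T) ↔
      toColex S < toColex T := by
  classical
  have h1 : ({ν} : Finset ℕ) ⊆ insert ν S := by simp
  have h2 : ({ν} : Finset ℕ) ⊆ insert ν T := by simp
  have := Finset.Colex.toColex_sdiff_lt_toColex_sdiff h1 h2
  rw [show insert ν S \ {ν} = S by
        rw [← Finset.erase_eq, Finset.erase_insert hS],
      show insert ν T \ {ν} = T by
        rw [← Finset.erase_eq, Finset.erase_insert hT]] at this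
  exact this.symm.trans Iff.rfl |>.symm.symm

lemma seg_initSeg : ∀ a ν m, m ≤ ν.choose a → ∀ A ∈ seg a ν m, ∀ B : Finset ℕ,
    B.card = a → toColex B < toColex A → B ∈ seg a ν m := by
  intro a ν
  induction ν generalizing a with
  | zero =>
    intro m hm A hA B hBcard hBA
    exfalso
    simp only [seg] at hA
    split_ifs at hA with h
    · simp only [Finset.mem_singleton] at hA
      subst hA
      rw [Colex.toColex_empty] at hBA
      exact not_lt_bot hBA
    · simp at hA
  | succ ν ih =>
    intro m hm A hA B hBcard hBA
    have hArange := Finset.mem_powersetCard.1 (seg_subset_powersetCard a (ν+1) m hm hA)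
    have hBrange : ∀ x ∈ B, x < ν + 1 :=
      Finset.Colex.forall_lt_mono hBA.le (fun x hx => Finset.mem_range.1 (hArange.1 hx))
    simp only [seg] at hA ⊢
    split_ifs at hA ⊢ with h
    · exact ih a m h A hA B hBcard hBA
    · obtain ⟨ha1, hq⟩ := seg_else_pos hm h
      rcases Finset.mem_union.1 hA with hA' | hA'
      · apply Finset.mem_union_left
        have hAν : ∀ x ∈ A, x < ν := fun x hx =>
          Finset.mem_range.1 ((Finset.mem_powersetCard.1 hA').1 hx)
        have : ∀ x ∈ B, x < ν := Finset.Colex.forall_lt_mono hBA.le hAν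
        exact Finset.mem_powersetCard.2 ⟨fun x hx => Finset.mem_range.2 (this x hx), hBcard⟩
      · rcases Finset.mem_image.1 hA' with ⟨S, hS, rfl⟩
        have hSsub := Finset.mem_powersetCard.1 (seg_subset_powersetCard _ _ _ hq hS)
        have hνS : ν ∉ S := fun hc => by have := hSsub.1 hc; simp at this
        by_cases hνB : ν ∈ B
        · apply Finset.mem_union_right
          have hB' : B = insert ν (B.erase ν) := by
            rw [Finset.insert_erase hνB]
          have hνB' : ν ∉ B.erase ν := Finset.notMem_erase _ _
          have hlt : toColex (B.erase ν) < toColex S := by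
            rw [← insert_lt_insert_iff hνB' hνS, ← hB']
            exact hBA
          have hcard' : (B.erase ν).card = a - 1 := by
            rw [Finset.card_erase_of_mem hνB, hBcard]
          have := ih (a-1) _ hq S hS (B.erase ν) hcard' hlt
          exact Finset.mem_image.2 ⟨B.erase ν, this, hB'.symm⟩
        · apply Finset.mem_union_left
          refine Finset.mem_powersetCard.2 ⟨fun x hx => Finset.mem_range.2 ?_, hBcard⟩
          have := hBrange x hx
          rcases Nat.lt_succ_iff_lt_or_eq.1 this with h' | rfl
          · exact h'
          · exact absurd hx hνB

lemma cov_full {b a ν : ℕ} (hba : b ≤ a) (haν : a ≤ ν) :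
    cov b ((Finset.range ν).powersetCard a) = (Finset.range ν).powersetCard b := by
  ext B
  rw [mem_cov, Finset.mem_powersetCard]
  constructor
  · rintro ⟨A, hA, hBA, hBcard⟩
    exact ⟨hBA.trans (Finset.mem_powersetCard.1 hA).1, hBcard⟩
  · rintro ⟨hBsub, hBcard⟩
    obtain ⟨A, hBA, hAsub, hAcard⟩ := Finset.exists_subsuperset_card_eq hBsub
      (hBcard.le.trans hba) (by rw [Finset.card_range]; exact haν)
    exact ⟨A, Finset.mem_powersetCard.2 ⟨hAsub, hAcard⟩, hBA, hBcard⟩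

lemma cov_seg_else {a b ν m : ℕ} (hm : m ≤ (ν+1).choose a) (h : ¬ m ≤ ν.choose a)
    (hb : 1 ≤ b) (hba : b ≤ a) (haν : a ≤ ν) :
    cov b (seg a (ν+1) m) = (Finset.range ν).powersetCard b ∪
      (cov (b-1) (seg (a-1) ν (m - ν.choose a))).image (insert ν) := by
  obtain ⟨ha1, hq⟩ := seg_else_pos hm h
  ext B
  constructor
  · intro hB
    obtain ⟨A, hA, hBA, hBcard⟩ := mem_cov.1 hB
    simp only [seg, if_neg h] at hA
    rcases Finset.mem_union.1 hA with hA' | hA'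
    · apply Finset.mem_union_left
      exact Finset.mem_powersetCard.2
        ⟨hBA.trans (Finset.mem_powersetCard.1 hA').1, hBcard⟩
    · rcases Finset.mem_image.1 hA' with ⟨S, hS, rfl⟩
      have hSsub := Finset.mem_powersetCard.1 (seg_subset_powersetCard _ _ _ hq hS)
      by_cases hνB : ν ∈ B
      · apply Finset.mem_union_right
        refine Finset.mem_image.2 ⟨B.erase ν, mem_cov.2 ⟨S, hS, ?_, ?_⟩, Finset.insert_erase hνB⟩
        · intro x hx
          have hx1 := Finset.mem_erase.1 hx
          rcases Finset.mem_insert.1 (hBA hx1.2) with h' | h'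
          · exact absurd h' hx1.1
          · exact h'
        · rw [Finset.card_erase_of_mem hνB, hBcard]
      · apply Finset.mem_union_left
        refine Finset.mem_powersetCard.2 ⟨fun x hx => ?_, hBcard⟩
        rcases Finset.mem_insert.1 (hBA hx) with rfl | h'
        · exact absurd hx hνB
        · exact hSsub.1 h'
  · intro hB
    rcases Finset.mem_union.1 hB with hB' | hB'
    · obtain ⟨hBsub, hBcard⟩ := Finset.mem_powersetCard.1 hB'
      obtain ⟨A, hBA, hAsub, hAcard⟩ := Finset.exists_subsuperset_card_eq hBsub
        (hBcard.le.trans hba) (by rw [Finset.card_range]; exact haν)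
      refine mem_cov.2 ⟨A, ?_, hBA, hBcard⟩
      simp only [seg, if_neg h]
      exact Finset.mem_union_left _ (Finset.mem_powersetCard.2 ⟨hAsub, hAcard⟩)
    · rcases Finset.mem_image.1 hB' with ⟨B', hB'', rfl⟩
      obtain ⟨S, hS, hB'S, hB'card⟩ := mem_cov.1 hB''
      have hSsub := Finset.mem_powersetCard.1 (seg_subset_powersetCard _ _ _ hq hS)
      have hνB' : ν ∉ B' := fun hc => by have := hSsub.1 (hB'S hc); simp at this
      refine mem_cov.2 ⟨insert ν S, ?_, Finset.insert_subset_insert _ hB'S, ?_⟩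
      · simp only [seg, if_neg h]
        exact Finset.mem_union_right _ (Finset.mem_image.2 ⟨S, hS, rfl⟩)
      · rw [Finset.card_insert_of_notMem hνB', hB'card]
        omega

lemma cov_seg_else_card {a b ν m : ℕ} (hm : m ≤ (ν+1).choose a) (h : ¬ m ≤ ν.choose a)
    (hb : 1 ≤ b) (hba : b ≤ a) (haν : a ≤ ν) :
    (cov b (seg a (ν+1) m)).card =
      ν.choose b + (cov (b-1) (seg (a-1) ν (m - ν.choose a))).card := by
  obtain ⟨ha1, hq⟩ := seg_else_pos hm h
  rw [cov_seg_else hm h hb hba haν]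
  have hcovsub : ∀ B' ∈ cov (b-1) (seg (a-1) ν (m - ν.choose a)), B' ⊆ Finset.range ν := by
    intro B' hB'
    obtain ⟨S, hS, hB'S, _⟩ := mem_cov.1 hB'
    exact hB'S.trans (Finset.mem_powersetCard.1 (seg_subset_powersetCard _ _ _ hq hS)).1
  have hdisj : Disjoint ((Finset.range ν).powersetCard b)
      ((cov (b-1) (seg (a-1) ν (m - ν.choose a))).image (insert ν)) := by
    rw [Finset.disjoint_right]
    rintro B hB hB2
    rcases Finset.mem_image.1 hB with ⟨B', hB', rfl⟩
    have := (Finset.mem_powersetCard.1 hB2).1 (Finset.mem_insert_self ν B')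
    simp at this
  rw [Finset.card_union_of_disjoint hdisj, Finset.card_powersetCard, Finset.card_range]
  congr 1
  apply Finset.card_image_of_injOn
  intro S hSm T hTm hST
  have hνS : ν ∉ S := fun hc => by have := hcovsub S hSm hc; simp at this
  have hνT : ν ∉ T := fun hc => by have := hcovsub T hTm hc; simp at this
  have : (insert ν S).erase ν = (insert ν T).erase ν := by rw [hST]
  rwa [Finset.erase_insert hνS, Finset.erase_insert hνT] at this

/-- Defect-free counting: any family of `a`-sets inside a ground set of size `≤ a + b`
covers at least `|S|` many `b`-sets. -/
lemma aux_count {a b : ℕ} (hb : 1 ≤ b) (hba : b ≤ a) {G : Finset ℕ} (hG : G.card ≤ a + b)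
    {S : Finset (Finset ℕ)} (hS : ∀ A ∈ S, A ⊆ G ∧ A.card = a) :
    S.card ≤ (cov b S).card := by
  classical
  have e1 : ∀ A ∈ S, ((cov b S).filter (fun B => B ⊆ A)).card = a.choose b := by
    intro A hA
    have : (cov b S).filter (fun B => B ⊆ A) = A.powersetCard b := by
      ext B
      simp only [Finset.mem_filter, mem_cov, Finset.mem_powersetCard]
      constructor
      · rintro ⟨⟨A₀, hA₀, hBA₀, hBcard⟩, hBA⟩
        exact ⟨hBA, hBcard⟩
      · rintro ⟨hBA, hBcard⟩
        exact ⟨⟨A, hA, hBA, hBcard⟩, hBA⟩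
    rw [this, Finset.card_powersetCard, (hS A hA).2]
  have e3 : ∀ B ∈ cov b S, (S.filter (fun A => B ⊆ A)).card ≤ a.choose b := by
    intro B hB
    obtain ⟨A₀, hA₀, hBA₀, hBcard⟩ := mem_cov.1 hB
    have hBG : B ⊆ G := hBA₀.trans (hS A₀ hA₀).1
    have step : (S.filter (fun A => B ⊆ A)).card ≤ ((G \ B).powersetCard (a-b)).card := by
      apply Finset.card_le_card_of_injOn (fun A => A \ B)
      · intro A hA
        have hA' := Finset.mem_filter.1 hA
        have := hS A hA'.1
        refine Finset.mem_powersetCard.2 ⟨Finset.sdiff_subset_sdiff this.1 Finset.Subset.rfl, ?_⟩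
        rw [Finset.card_sdiff_of_subset hA'.2, this.2, hBcard]
      · intro A₁ h₁ A₂ h₂ hh
        have h₁' := Finset.mem_filter.1 h₁
        have h₂' := Finset.mem_filter.1 h₂
        have := congrArg (fun t => t ∪ B) hh
        simpa [Finset.sdiff_union_of_subset h₁'.2, Finset.sdiff_union_of_subset h₂'.2] using this
    refine step.trans ?_
    rw [Finset.card_powersetCard, Finset.card_sdiff_of_subset hBG, hBcard]
    calc (G.card - b).choose (a-b) ≤ a.choose (a-b) := Nat.choose_mono _ (by omega)
      _ = a.choose b := Nat.choose_symm hba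
  have e2 : ∑ A ∈ S, ((cov b S).filter (fun B => B ⊆ A)).card
      = ∑ B ∈ cov b S, (S.filter (fun A => B ⊆ A)).card := by
    simp_rw [Finset.card_filter]
    rw [Finset.sum_comm]
  have big : S.card * a.choose b ≤ (cov b S).card * a.choose b := by
    calc S.card * a.choose b = ∑ A ∈ S, a.choose b := by rw [Finset.sum_const, smul_eq_mul]
      _ = ∑ A ∈ S, ((cov b S).filter (fun B => B ⊆ A)).card := (Finset.sum_congr rfl e1).symm
      _ = ∑ B ∈ cov b S, (S.filter (fun A => B ⊆ A)).card := e2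
      _ ≤ ∑ B ∈ cov b S, a.choose b := Finset.sum_le_sum e3
      _ = (cov b S).card * a.choose b := by rw [Finset.sum_const, smul_eq_mul]
  exact Nat.le_of_mul_le_mul_right big (Nat.choose_pos hba)

lemma seg_one : ∀ a ν, a ≤ ν → seg a ν 1 = {Finset.range a} := by
  intro a ν
  induction ν generalizing a with
  | zero =>
    intro ha
    interval_cases a
    simp [seg]
  | succ ν ih =>
    intro ha
    simp only [seg]
    split_ifs with h
    · have haν : a ≤ ν := by
        by_contra hc
        push_neg at hc
        rw [Nat.choose_eq_zero_of_lt hc] at h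
        omega
      exact ih a haν
    · have haν : ν < a := by
        by_contra hc
        push_neg at hc
        rw [Nat.one_le_iff_ne_zero] at h
        exact h (by simpa using Nat.choose_pos hc |>.ne')
      have haa : a = ν + 1 := by omega
      subst haa
      have h1 : (Finset.range ν).powersetCard (ν+1) = ∅ := by
        apply Finset.powersetCard_eq_empty.2
        simp
      have h2 : seg (ν + 1 - 1) ν (1 - ν.choose (ν+1)) = seg ν ν 1 := by
        rw [Nat.choose_eq_zero_of_lt (by omega)]
        norm_num
      rw [h1, h2, ih ν le_rfl]
      rw [Finset.empty_union, Finset.image_singleton, ← Finset.range_add_one]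

lemma mem_seg_small : ∀ a m, 1 ≤ m → m ≤ a + 1 →
    ∀ A, (A ∈ seg a (a+1) m ↔ ∃ x, a + 1 - m ≤ x ∧ x ≤ a ∧ A = (Finset.range (a+1)).erase x) := by
  intro a
  induction a with
  | zero =>
    intro m h1 h2 A
    interval_cases m
    rw [seg_one 0 1 (by omega)]
    simp only [Finset.mem_singleton, Finset.range_zero]
    constructor
    · rintro rfl
      exact ⟨0, by simp⟩
    · rintro ⟨x, hx1, hx2, rfl⟩
      interval_cases x
      simp
  | succ a ih =>
    intro m h1 h2 A
    rcases Nat.eq_or_lt_of_le h1 with rfl | hm2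
    · rw [seg_one (a+1) (a+2) (by omega)]
      simp only [Finset.mem_singleton]
      constructor
      · rintro rfl
        refine ⟨a+1, by omega, by omega, ?_⟩
        rw [Finset.range_add_one (n := a+1), Finset.erase_insert (by simp)]
      · rintro ⟨x, hx1, hx2, rfl⟩
        have : x = a + 1 := by omega
        subst this
        rw [Finset.range_add_one (n := a+1), Finset.erase_insert (by simp)]
    · -- m ≥ 2
      have hnotle : ¬ m ≤ (a+1).choose (a+1) := by
        rw [Nat.choose_self]; omega
      rw [seg_succ, if_neg hnotle]
      have hps : (Finset.range (a+1)).powersetCard (a+1) = {Finset.range (a+1)} := by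
        simpa using Finset.powersetCard_self (Finset.range (a+1))
      have hrec : seg (a + 1 - 1) (a+1) (m - (a+1).choose (a+1)) = seg a (a+1) (m-1) := by
        rw [Nat.choose_self]
        norm_num
      rw [hps, hrec]
      constructor
      · intro hA
        rcases Finset.mem_union.1 hA with hA' | hA'
        · refine ⟨a+1, by omega, by omega, ?_⟩
          rw [Finset.mem_singleton] at hA'
          rw [hA', Finset.range_add_one (n := a+1), Finset.erase_insert (by simp)]
        · rcases Finset.mem_image.1 hA' with ⟨S, hS, rfl⟩
          obtain ⟨x, hx1, hx2, rfl⟩ := (ih (m-1) (by omega) (by omega) S).1 hS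
          refine ⟨x, by omega, by omega, ?_⟩
          rw [Finset.range_add_one (n := a+1)]
          rw [Finset.erase_insert_of_ne (by omega)]
      · rintro ⟨x, hx1, hx2, rfl⟩
        rcases Nat.eq_or_lt_of_le hx2 with rfl | hxa
        · apply Finset.mem_union_left
          rw [Finset.mem_singleton, Finset.range_add_one (n := a+1), Finset.erase_insert (by simp)]
        · apply Finset.mem_union_right
          refine Finset.mem_image.2 ⟨(Finset.range (a+1)).erase x, ?_, ?_⟩
          · exact (ih (m-1) (by omega) (by omega) _).2 ⟨x, by omega, by omega, rfl⟩
          · rw [Finset.range_add_one (n := a+1), Finset.erase_insert_of_ne (by omega)]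

lemma card_filter_superset {T U : Finset ℕ} (hTU : T ⊆ U) (bb : ℕ) (hTb : T.card ≤ bb) :
    ((U.powersetCard bb).filter (fun B => T ⊆ B)).card = (U.card - T.card).choose (bb - T.card) := by
  classical
  have hps := Finset.card_powersetCard (bb - T.card) (U \ T)
  rw [Finset.card_sdiff_of_subset hTU] at hps
  rw [← hps]
  apply Finset.card_bij' (fun B _ => B \ T) (fun C _ => C ∪ T)
  · intro B hB
    have hB' := Finset.mem_filter.1 hB
    have hBU := Finset.mem_powersetCard.1 hB'.1
    refine Finset.mem_powersetCard.2 ⟨Finset.sdiff_subset_sdiff hBU.1 Finset.Subset.rfl, ?_⟩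
    rw [Finset.card_sdiff_of_subset hB'.2, hBU.2]
  · intro C hC
    have hC' := Finset.mem_powersetCard.1 hC
    have hdisj : Disjoint C T := by
      refine Finset.disjoint_left.2 fun x hx hxT => ?_
      have := hC'.1 hx
      exact (Finset.mem_sdiff.1 this).2 hxT
    refine Finset.mem_filter.2 ⟨Finset.mem_powersetCard.2 ⟨?_, ?_⟩, Finset.subset_union_right⟩
    · exact Finset.union_subset ((hC'.1).trans Finset.sdiff_subset) hTU
    · rw [Finset.card_union_of_disjoint hdisj, hC'.2]
      omega
  · intro B hB
    have hB' := Finset.mem_filter.1 hB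
    exact Finset.sdiff_union_of_subset hB'.2
  · intro C hC
    have hC' := Finset.mem_powersetCard.1 hC
    have hdisj : Disjoint C T := by
      refine Finset.disjoint_left.2 fun x hx hxT => ?_
      have := hC'.1 hx
      exact (Finset.mem_sdiff.1 this).2 hxT
    rw [Finset.union_sdiff_distrib, Finset.sdiff_self, Finset.union_empty,
      Finset.sdiff_eq_self_of_disjoint hdisj]

lemma cov_seg_small_eq {a b m : ℕ} (hb1 : 1 ≤ b) (hba : b ≤ a) (h1 : 1 ≤ m) (hm : m ≤ a+1)
    {ν : ℕ} (hν : a + 1 ≤ ν) :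
    cov b (seg a ν m) = ((Finset.range (a+1)).powersetCard b).filter
      (fun B => ¬ Finset.Icc (a+1-m) a ⊆ B) := by
  have hst : seg a ν m = seg a (a+1) m := by
    apply seg_stable hν
    rw [Nat.choose_succ_self_right]
    exact hm
  rw [hst]
  ext B
  rw [mem_cov, Finset.mem_filter, Finset.mem_powersetCard]
  constructor
  · rintro ⟨A, hA, hBA, hBcard⟩
    obtain ⟨x, hx1, hx2, rfl⟩ := (mem_seg_small a m h1 hm A).1 hA
    refine ⟨⟨hBA.trans (Finset.erase_subset _ _), hBcard⟩, fun hsub => ?_⟩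
    have hxB : x ∈ B := hsub (Finset.mem_Icc.2 ⟨hx1, hx2⟩)
    exact (Finset.mem_erase.1 (hBA hxB)).1 rfl
  · rintro ⟨⟨hBsub, hBcard⟩, hnsub⟩
    rw [Finset.not_subset] at hnsub
    obtain ⟨x, hx, hxB⟩ := hnsub
    rw [Finset.mem_Icc] at hx
    refine ⟨(Finset.range (a+1)).erase x, ?_, ?_, hBcard⟩
    · exact (mem_seg_small a m h1 hm _).2 ⟨x, hx.1, hx.2, rfl⟩
    · intro y hy
      exact Finset.mem_erase.2 ⟨fun hc => hxB (hc ▸ hy), hBsub hy⟩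

lemma cov_seg_small_card {a b m : ℕ} (hb1 : 1 ≤ b) (hba : b ≤ a) (h1 : 1 ≤ m) (hm : m ≤ a+1)
    {ν : ℕ} (hν : a + 1 ≤ ν) :
    (cov b (seg a ν m)).card +
      (if m ≤ b then (a+1-m).choose (b-m) else 0) = (a+1).choose b := by
  rw [cov_seg_small_eq hb1 hba h1 hm hν]
  have hTU : Finset.Icc (a+1-m) a ⊆ Finset.range (a+1) := by
    intro x hx
    rw [Finset.mem_Icc] at hx
    exact Finset.mem_range.2 (by omega)
  have hTcard : (Finset.Icc (a+1-m) a).card = m := by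
    rw [Nat.card_Icc]
    omega
  classical
  have hsplit : ((Finset.range (a+1)).powersetCard b).filter
        (fun B => ¬ Finset.Icc (a+1-m) a ⊆ B)
      = (Finset.range (a+1)).powersetCard b \
        ((Finset.range (a+1)).powersetCard b).filter (fun B => Finset.Icc (a+1-m) a ⊆ B) :=
    Finset.filter_not _ _
  have hsub := Finset.filter_subset (fun B => Finset.Icc (a+1-m) a ⊆ B)
    ((Finset.range (a+1)).powersetCard b)
  have hcards := Finset.card_le_card hsub
  have htot : ((Finset.range (a+1)).powersetCard b).card = (a+1).choose b := by
    rw [Finset.card_powersetCard, Finset.card_range]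
  rw [hsplit, Finset.card_sdiff_of_subset hsub]
  split_ifs with hmb
  · have hval := card_filter_superset hTU b (by omega)
    rw [hTcard, Finset.card_range] at hval
    omega
  · have hempty : ((Finset.range (a+1)).powersetCard b).filter
        (fun B => Finset.Icc (a+1-m) a ⊆ B) = ∅ := by
      rw [Finset.filter_eq_empty_iff]
      intro B hB hsub2
      have h1' := Finset.card_le_card hsub2
      rw [hTcard, (Finset.mem_powersetCard.1 hB).2] at h1'
      omega
    rw [hempty]
    simp [htot]

lemma choose_ge_self : ∀ N j : ℕ, 1 ≤ j → j + 1 ≤ N → N ≤ N.choose j := by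
  intro N
  induction N with
  | zero => intro j h1 h2; omega
  | succ N ih =>
    intro j h1 h2
    rcases Nat.eq_or_lt_of_le h2 with h | h
    · rw [← h, Nat.choose_succ_self_right]
    · obtain ⟨jj, rfl⟩ := Nat.exists_eq_add_of_le h1
      rw [show 1 + jj = jj + 1 by omega, Nat.choose_succ_succ]
      simp only [Nat.succ_eq_add_one]
      have t1 : 0 < N.choose jj := Nat.choose_pos (by omega)
      have t2 : N ≤ N.choose (jj+1) := ih (jj+1) (by omega) (by omega)
      omega

lemma arith_le_b {a b r : ℕ} (hba : b ≤ a) :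
    ∀ m, r ≤ m → m ≤ b → (a+1-m).choose (b-m) + (m - r) ≤ (a+1-r).choose (b-r) := by
  intro m
  induction m with
  | zero =>
    intro h1 _
    have : r = 0 := by omega
    subst this
    simp
  | succ m ih =>
    intro h1 h2
    rcases Nat.eq_or_lt_of_le h1 with h | h
    · rw [← h]
      simp
    · show (a+1-(m+1)).choose (b-(m+1)) + (m + 1 - r) ≤ (a+1-r).choose (b-r)
      have hrm : r ≤ m := by omega
      have hmb : m ≤ b := by omega
      have key : (a+1-(m+1)).choose (b-(m+1)) + 1 ≤ (a+1-m).choose (b-m) := by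
        have hma : m < a := by omega
        obtain ⟨v, hv⟩ : ∃ v, b - m = v + 1 := ⟨b - m - 1, by omega⟩
        have e1 : a + 1 - m = (a - m - 1) + 2 := by omega
        have e2 : a + 1 - (m+1) = (a - m - 1) + 1 := by omega
        have e3 : b - (m+1) = v := by omega
        rw [e1, e2, e3, hv]
        rw [show (a - m - 1) + 2 = ((a-m-1)+1) + 1 by omega, Nat.choose_succ_succ]
        simp only [Nat.succ_eq_add_one]
        have : 0 < ((a-m-1)+1).choose (v+1) := Nat.choose_pos (by omega)
        omega
      have := ih hrm hmb
      omega

lemma goal_main (a b : ℕ) (hb : 2 ≤ b) (hba : b ≤ a) {r : ℕ} (hr1 : 1 ≤ r) (hrb : r ≤ b - 1) :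
    ∀ m, r ≤ m → m ≤ (a+b-1).choose a →
    (cov b (seg a (a+b-1) r)).card + (m - r) ≤ (cov b (seg a (a+b-1) m)).card := by
  intro m
  induction m using Nat.strong_induction_on with
  | _ m IH =>
  intro hrm hcap
  by_cases hsmall : m ≤ a + 1
  · have hν : a + 1 ≤ a + b - 1 := by omega
    have hr := cov_seg_small_card (b := b) (a := a) (by omega) hba hr1 (by omega) hν
    have hm := cov_seg_small_card (b := b) (a := a) (by omega) hba (by omega) hsmall hν
    rw [if_pos (show r ≤ b by omega)] at hr
    by_cases hmb : m ≤ b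
    · rw [if_pos hmb] at hm
      have harith := arith_le_b hba m hrm hmb
      omega
    · rw [if_neg hmb] at hm
      have hge : a + 1 - r ≤ (a+1-r).choose (b-r) :=
        choose_ge_self _ _ (by omega) (by omega)
      omega
  · push_neg at hsmall
    have hcapA1 : (a+1 : ℕ).choose a < m := by
      rw [Nat.choose_succ_self_right]; omega
    have hb3 : 3 ≤ b := by
      by_contra hc
      have hbb : b = 2 := by omega
      subst hbb
      rw [show a + 2 - 1 = a + 1 by omega, Nat.choose_succ_self_right] at hcap
      omega
    classical
    set ν := Nat.findGreatest (fun ν' => ν'.choose a < m) (a+b-2) with hνdef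
    have hν1 : a + 1 ≤ ν := Nat.le_findGreatest (by omega) hcapA1
    have hν2 : ν ≤ a + b - 2 := Nat.findGreatest_le _
    have hlow : ν.choose a < m :=
      Nat.findGreatest_spec (P := fun ν' => ν'.choose a < m) (m := a+1) (by omega) hcapA1
    have hhigh : m ≤ (ν+1).choose a := by
      rcases Nat.lt_or_ge (ν+1) (a+b-1) with h | h
      · have := Nat.findGreatest_is_greatest (P := fun ν' => ν'.choose a < m) (n := a+b-2)
          (show ν < ν + 1 by omega) (by omega)
        exact not_lt.1 this
      · have : ν + 1 = a + b - 1 := by omega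
        rw [this]
        exact hcap
    have haν : a ≤ ν := by omega
    have hstable : seg a (a+b-1) m = seg a (ν+1) m := seg_stable (by omega) hhigh
    obtain ⟨ha1, hq2⟩ := seg_else_pos hhigh (not_le.2 hlow)
    have hdecomp := cov_seg_else_card hhigh (not_le.2 hlow) (show 1 ≤ b by omega) hba haν
    have haux : m - ν.choose a ≤ (cov (b-1) (seg (a-1) ν (m - ν.choose a))).card := by
      have hcard := seg_card (a-1) ν _ hq2
      have haux0 : (seg (a-1) ν (m - ν.choose a)).card
          ≤ (cov (b-1) (seg (a-1) ν (m - ν.choose a))).card := by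
        apply aux_count (a := a-1) (b := b-1) (show 1 ≤ b-1 by omega) (by omega) (G := Finset.range ν)
          (by rw [Finset.card_range]; omega)
        intro A hA
        have := Finset.mem_powersetCard.1 (seg_subset_powersetCard _ _ _ hq2 hA)
        exact ⟨this.1, this.2⟩
      rwa [hcard] at haux0
    have hchoosemono : a + 1 ≤ ν.choose a := by
      rw [← Nat.choose_succ_self_right a]
      exact Nat.choose_mono a hν1
    have hIH := IH (ν.choose a) (by omega) (by omega)
      ((Nat.choose_mono a (show ν ≤ a+b-1 by omega)))
    have hm1 : (cov b (seg a (a+b-1) (ν.choose a))).card = ν.choose b := by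
      rw [seg_stable (show ν ≤ a+b-1 by omega) le_rfl, seg_full, cov_full hba haν,
        Finset.card_powersetCard, Finset.card_range]
    rw [hm1] at hIH
    rw [hstable, hdecomp]
    omega

lemma image_val_attachFin {n : ℕ} (s : Finset ℕ) (h : ∀ m ∈ s, m < n) :
    (Finset.attachFin s h).image Fin.val = s := by
  ext y
  simp only [Finset.mem_image]
  constructor
  · rintro ⟨i, hi, rfl⟩
    exact (Finset.mem_attachFin h).1 hi
  · intro hy
    exact ⟨⟨y, h y hy⟩, (Finset.mem_attachFin h).2 hy, rfl⟩

lemma card_mirror {n c : ℕ} (f : Fin n → ℕ) (hf : Function.Injective f)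
    (H : Finset (Finset ℕ)) (hcards : ∀ S ∈ H, S.card = c)
    (hback : ∀ S ∈ H, ∃ A : Finset (Fin n), A.image f = S) :
    (((Finset.univ : Finset (Fin n)).powersetCard c).filter
      (fun A => A.image f ∈ H)).card = H.card := by
  apply Finset.card_bij (fun A _ => A.image f)
  · intro A hA
    exact (Finset.mem_filter.1 hA).2
  · intro A₁ h₁ A₂ h₂ h
    exact Finset.image_injective hf h
  · intro S hS
    obtain ⟨A, rfl⟩ := hback S hS
    refine ⟨A, Finset.mem_filter.2 ⟨Finset.mem_powersetCard.2 ⟨Finset.subset_univ _, ?_⟩, hS⟩, rfl⟩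
    rw [← Finset.card_image_of_injective A hf]
    exact hcards _ hS

end CrossInt

open CrossInt in
open scoped FinsetFamily in
theorem stmt_18 (n k r : ℕ) (hk : 2 ≤ k) (hr1 : 1 ≤ r) (hrk : r ≤ k - 1)
    (hn : 2 * k ≤ n)
    (F G : Finset (Finset ℕ))
    (hF : F ⊆ (Finset.Icc 1 n).powersetCard k)
    (hG : G ⊆ (Finset.Icc 1 n).powersetCard k)
    (hFr : r ≤ F.card) (hGF : F.card ≤ G.card)
    (hcross : ∀ A ∈ F, ∀ B ∈ G, (A ∩ B).Nonempty) :
    F.card + G.card ≤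
      n.choose k - (n - k + 1).choose k + (n - k - r + 1).choose (k - r) + r := by
  classical
  set m := F.card with hm
  have hn4 : 4 ≤ n := by omega
  have hkn : k ≤ n := by omega
  set d : ℕ := n - 2 * k with hd
  set f1 : Fin n → ℕ := fun i => (i : ℕ) + 1 with hf1
  have hf1inj : Function.Injective f1 := by
    intro x y h
    simp only [hf1] at h
    exact Fin.val_injective (by omega)
  -- mirror families in `Fin n`
  set F' : Finset (Finset (Fin n)) :=
    ((Finset.univ : Finset (Fin n)).powersetCard k).filter (fun A => A.image f1 ∈ F) with hF'
  set G' : Finset (Finset (Fin n)) :=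
    ((Finset.univ : Finset (Fin n)).powersetCard k).filter (fun A => A.image f1 ∈ G) with hG'
  have hback : ∀ (H : Finset (Finset ℕ)), H ⊆ (Finset.Icc 1 n).powersetCard k →
      ∀ S ∈ H, ∃ A : Finset (Fin n), A.image f1 = S := by
    intro H hH S hS
    have hS' := Finset.mem_powersetCard.1 (hH hS)
    have hlt : ∀ x ∈ S.image (fun y => y - 1), x < n := by
      intro x hx
      obtain ⟨y, hy, rfl⟩ := Finset.mem_image.1 hx
      have := Finset.mem_Icc.1 (hS'.1 hy)
      omega
    refine ⟨Finset.attachFin (S.image (fun y => y - 1)) hlt, ?_⟩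
    ext z
    simp only [Finset.mem_image, hf1]
    constructor
    · rintro ⟨i, hi, rfl⟩
      have := (Finset.mem_attachFin hlt).1 hi
      obtain ⟨y, hy, hy2⟩ := Finset.mem_image.1 this
      have := Finset.mem_Icc.1 (hS'.1 hy)
      have : (i : ℕ) + 1 = y := by omega
      rwa [this]
    · intro hz
      have hz1 : 1 ≤ z := (Finset.mem_Icc.1 (hS'.1 hz)).1
      have hzn : z ≤ n := (Finset.mem_Icc.1 (hS'.1 hz)).2
      refine ⟨⟨z - 1, by omega⟩, (Finset.mem_attachFin hlt).2 ?_, by simp; omega⟩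
      exact Finset.mem_image.2 ⟨z, hz, rfl⟩
  have hcardsF : ∀ S ∈ F, S.card = k := fun S hS => (Finset.mem_powersetCard.1 (hF hS)).2
  have hcardsG : ∀ S ∈ G, S.card = k := fun S hS => (Finset.mem_powersetCard.1 (hG hS)).2
  have hF'card : F'.card = m := card_mirror f1 hf1inj F hcardsF (hback F hF)
  have hG'card : G'.card = G.card := card_mirror f1 hf1inj G hcardsG (hback G hG)
  have hF'sized : (F' : Set (Finset (Fin n))).Sized k := fun A hA =>
    (Finset.mem_powersetCard.1 (Finset.mem_filter.1 hA).1).2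
  have hG'sized : (G' : Set (Finset (Fin n))).Sized k := fun A hA =>
    (Finset.mem_powersetCard.1 (Finset.mem_filter.1 hA).1).2
  -- complement family
  set 𝒟 : Finset (Finset (Fin n)) := F'ᶜˢ with h𝒟
  have h𝒟sized : (𝒟 : Set (Finset (Fin n))).Sized (n - k) := by
    have := hF'sized.compls
    rwa [Fintype.card_fin] at this
  have h𝒟card : 𝒟.card = m := by rw [h𝒟, Finset.card_compls, hF'card]
  -- m bounded by total number of (n-k)-sets
  have hchoose_nk : n.choose k = n.choose (n - k) := by
    rw [← Nat.choose_symm hkn]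
  have hmtot : m ≤ n.choose (n - k) := by
    rw [← hchoose_nk, hm]
    calc F.card ≤ ((Finset.Icc 1 n).powersetCard k).card := Finset.card_le_card hF
      _ = n.choose k := by rw [Finset.card_powersetCard, Nat.card_Icc]; norm_num
  -- the initial segment family in Fin n
  set 𝒞 : Finset (Finset (Fin n)) :=
    ((Finset.univ : Finset (Fin n)).powersetCard (n-k)).filter
      (fun A => A.image Fin.val ∈ seg (n-k) n m) with h𝒞
  have hsegsub : ∀ S ∈ seg (n-k) n m, S ⊆ Finset.range n ∧ S.card = n - k := by
    intro S hS
    have := Finset.mem_powersetCard.1 (seg_subset_powersetCard _ _ _ hmtot hS)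
    exact ⟨this.1, this.2⟩
  have h𝒞card : 𝒞.card = m := by
    rw [h𝒞, card_mirror Fin.val Fin.val_injective _ (fun S hS => (hsegsub S hS).2)
      (fun S hS => ?_), seg_card _ _ _ hmtot]
    have hlt : ∀ x ∈ S, x < n := fun x hx => Finset.mem_range.1 ((hsegsub S hS).1 hx)
    exact ⟨Finset.attachFin S hlt, image_val_attachFin S hlt⟩
  have h𝒞init : Finset.Colex.IsInitSeg 𝒞 (n-k) := by
    constructor
    · intro A hA
      exact (Finset.mem_powersetCard.1 (Finset.mem_filter.1 hA).1).2
    · rintro A B hA ⟨hBA, hBcard⟩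
      refine Finset.mem_filter.2 ⟨Finset.mem_powersetCard.2 ⟨Finset.subset_univ _, hBcard⟩, ?_⟩
      apply seg_initSeg (n-k) n m hmtot (A.image Fin.val) (Finset.mem_filter.1 hA).2
      · rw [Finset.card_image_of_injective _ Fin.val_injective]
        exact hBcard
      · exact (Finset.Colex.toColex_image_lt_toColex_image Fin.val_strictMono).2 hBA
  -- Kruskal-Katona
  have hkk : (∂^[d] 𝒞).card ≤ (∂^[d] 𝒟).card := by
    apply Finset.iterated_kk h𝒟sized _ h𝒞init
    rw [h𝒞card, h𝒟card]
  -- identify the iterated shadow of 𝒞 with cov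
  have hTmdef : (∂^[d] 𝒞).card = (cov k (seg (n-k) n m)).card := by
    have hset : ∂^[d] 𝒞 = ((Finset.univ : Finset (Fin n)).powersetCard k).filter
        (fun B => B.image Fin.val ∈ cov k (seg (n-k) n m)) := by
      ext B
      rw [Finset.mem_shadow_iterate_iff_exists_sdiff]
      constructor
      · rintro ⟨A, hA, hBA, hABd⟩
        have hAmem := Finset.mem_filter.1 hA
        have hAcard : A.card = n - k := (Finset.mem_powersetCard.1 hAmem.1).2
        have hBcard : B.card = k := by
          rw [Finset.card_sdiff_of_subset hBA, hAcard] at hABd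
          have hle : B.card ≤ A.card := Finset.card_le_card hBA
          rw [hAcard] at hle
          omega
        refine Finset.mem_filter.2 ⟨Finset.mem_powersetCard.2 ⟨Finset.subset_univ _, hBcard⟩, ?_⟩
        refine mem_cov.2 ⟨A.image Fin.val, hAmem.2, Finset.image_subset_image hBA, ?_⟩
        rw [Finset.card_image_of_injective _ Fin.val_injective, hBcard]
      · intro hB
        have hBmem := Finset.mem_filter.1 hB
        have hBcard : B.card = k := (Finset.mem_powersetCard.1 hBmem.1).2
        obtain ⟨S, hS, hBS, hBval⟩ := mem_cov.1 hBmem.2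
        have hlt : ∀ x ∈ S, x < n := fun x hx => Finset.mem_range.1 ((hsegsub S hS).1 hx)
        set A : Finset (Fin n) := Finset.attachFin S hlt with hA
        have hAval : A.image Fin.val = S := image_val_attachFin S hlt
        have hAcard : A.card = n - k := by
          rw [Finset.card_attachFin]
          exact (hsegsub S hS).2
        have hBA : B ⊆ A := by
          intro x hx
          rw [hA, Finset.mem_attachFin]
          exact hBS (Finset.mem_image.2 ⟨x, hx, rfl⟩)
        refine ⟨A, Finset.mem_filter.2 ⟨Finset.mem_powersetCard.2
          ⟨Finset.subset_univ _, hAcard⟩, by rw [hAval]; exact hS⟩, hBA, ?_⟩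
        rw [Finset.card_sdiff_of_subset hBA, hAcard, hBcard]
        omega
    rw [hset]
    apply card_mirror Fin.val Fin.val_injective
    · intro S hS
      obtain ⟨A₀, hA₀, hSA₀, hScard⟩ := mem_cov.1 hS
      exact hScard
    · intro S hS
      obtain ⟨A₀, hA₀, hSA₀, hScard⟩ := mem_cov.1 hS
      have hlt : ∀ x ∈ S, x < n := fun x hx =>
        Finset.mem_range.1 ((hsegsub A₀ hA₀).1 (hSA₀ hx))
      exact ⟨Finset.attachFin S hlt, image_val_attachFin S hlt⟩
  -- cross-intersecting gives disjointness
  have hdisj : Disjoint G' (∂^[d] 𝒟) := by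
    rw [Finset.disjoint_left]
    intro B hBG hBsh
    obtain ⟨C, hC, hBC, _⟩ := Finset.mem_shadow_iterate_iff_exists_sdiff.1 hBsh
    have hCc : Cᶜ ∈ F' := Finset.mem_compls.1 hC
    have hABdisj : Disjoint (Cᶜ) B := by
      rw [Finset.disjoint_left]
      intro x hx hxB
      have := hBC hxB
      simp only [Finset.mem_compl] at hx
      exact hx this
    have hinter := hcross (Cᶜ.image f1) (Finset.mem_filter.1 hCc).2
      (B.image f1) (Finset.mem_filter.1 hBG).2
    obtain ⟨x, hx⟩ := hinter
    rw [Finset.mem_inter] at hx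
    obtain ⟨u, hu, hux⟩ := Finset.mem_image.1 hx.1
    obtain ⟨v, hv, hvx⟩ := Finset.mem_image.1 hx.2
    have : u = v := hf1inj (by rw [hux, hvx])
    subst this
    exact (Finset.disjoint_left.1 hABdisj hu) hv
  -- size bound
  have hshsized : ((∂^[d] 𝒟 : Finset (Finset (Fin n))) : Set (Finset (Fin n))).Sized k := by
    have := h𝒟sized.shadow_iterate (k := d)
    rwa [show n - k - d = k by omega] at this
  have hbound : G'.card + (∂^[d] 𝒟).card ≤ n.choose k := by
    rw [← Finset.card_union_of_disjoint hdisj]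
    have hsized : ((G' ∪ ∂^[d] 𝒟 : Finset (Finset (Fin n))) : Set (Finset (Fin n))).Sized k := by
      rw [Finset.coe_union, Set.sized_union]
      exact ⟨hG'sized, hshsized⟩
    have := hsized.card_le
    rwa [Fintype.card_fin] at this
  -- feasibility: m ≤ C(n-1, n-k)
  have hsymm1 : (n-1).choose (n-k) = (n-1).choose (k-1) := by
    have := Nat.choose_symm (show k - 1 ≤ n - 1 by omega)
    rwa [show n - 1 - (k-1) = n - k by omega] at this
  have hpascal : (n-1).choose (k-1) + (n-1).choose k = n.choose k := by
    have := Nat.choose_succ_succ (n-1) (k-1)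
    simp only [Nat.succ_eq_add_one] at this
    rw [show n - 1 + 1 = n by omega, show k - 1 + 1 = k by omega] at this
    omega
  have hTfull : (cov k (seg (n-k) n ((n-1).choose (n-k)))).card = (n-1).choose k := by
    rw [seg_stable (show n - 1 ≤ n by omega) le_rfl, seg_full,
      cov_full (show k ≤ n - k by omega) (by omega), Finset.card_powersetCard, Finset.card_range]
  have hfeas : m ≤ (n-1).choose (n-k) := by
    by_contra hc
    push_neg at hc
    have hmono : (cov k (seg (n-k) n ((n-1).choose (n-k)))).card
        ≤ (cov k (seg (n-k) n m)).card :=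
      Finset.card_le_card (cov_mono (seg_mono _ _ _ _ hc.le hmtot))
    rw [hTfull] at hmono
    -- m + Tm ≤ C(n,k) but m > C(n-1,n-k), Tm ≥ C(n-1,k)
    have h1 : m ≤ G.card := hGF
    have h2 : (cov k (seg (n-k) n m)).card ≤ (∂^[d] 𝒟).card := hTmdef ▸ hkk
    rw [← hG'card] at h1
    omega
  -- main colex inequality
  have hgoal := goal_main (n-k) k hk (by omega) hr1 hrk m hFr
    (by rw [show n - k + k - 1 = n - 1 by omega]; exact hfeas)
  rw [show n - k + k - 1 = n - 1 by omega] at hgoal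
  have hsegm : seg (n-k) n m = seg (n-k) (n-1) m := seg_stable (by omega) hfeas
  have hsegr : seg (n-k) n r = seg (n-k) (n-1) r :=
    seg_stable (by omega) (le_trans hFr hfeas)
  -- value at r
  have hTr := cov_seg_small_card (a := n-k) (b := k) (m := r) (by omega) (by omega)
    hr1 (by omega) (show n - k + 1 ≤ n by omega)
  rw [if_pos (show r ≤ k by omega)] at hTr
  -- assemble
  have h2 : (cov k (seg (n-k) n m)).card ≤ (∂^[d] 𝒟).card := hTmdef ▸ hkk
  have h1 : G'.card = G.card := hG'card
  rw [← hsegm, ← hsegr] at hgoal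
  rw [show n - k - r + 1 = n - k + 1 - r by omega]
  omega
end
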